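/- arXiv:1602.08580 — 8 statements merged into one kernel-verified Lean document; each statement's English description precedes it below -/
import Mathlib

section
/- For z ∈ ℂ with Re z ≥ 1 and ℓ ∈ ℕ₀, the polynomial p(x) = Σ_{k=0}^{ℓ} C(z+ℓ, k) x^k (1-x)^{ℓ-k} equals Σ_{k=0}^{ℓ} C(z-1+k, k) x^k for all x ∈ [0,1]. -/
open Complex Finset

/-- Generalized binomial coefficient `C(w, j) = Γ(w+1) / (Γ(j+1) Γ(w-j+1))`. -/
noncomputable def genBinom (w : ℂ) (j : ℕ) : ℂ :=
  Complex.Gamma (w + 1) / (Complex.Gamma ((j : ℂ) + 1) * Complex.Gamma (w - j + 1))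

lemma gammaNeZero' {w : ℂ} (h : 0 < w.re) : Complex.Gamma w ≠ 0 := by
  apply Complex.Gamma_ne_zero
  intro m hm
  rw [hm] at h
  simp only [neg_re, natCast_re] at h
  have : (0:ℝ) ≤ m := Nat.cast_nonneg m
  linarith

lemma genBinomZero {w : ℂ} (h : 0 < w.re + 1) : genBinom w 0 = 1 := by
  have hne : Complex.Gamma (w + 1) ≠ 0 := gammaNeZero' (by simpa [add_re] using h)
  simp [genBinom, Complex.Gamma_one, div_self hne]

lemma genBinomPascal {w : ℂ} {k : ℕ} (h : 0 < (w - k).re) :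
    genBinom (w + 1) (k + 1) = genBinom w (k + 1) + genBinom w k := by
  have hkre : (k:ℝ) < w.re := by
    simp only [sub_re, natCast_re] at h; linarith
  have hk : ((k:ℂ) + 1) ≠ 0 := by
    intro h0
    have := congrArg Complex.re h0
    simp only [add_re, natCast_re, one_re, zero_re] at this
    have : (0:ℝ) ≤ (k:ℝ) := Nat.cast_nonneg k
    linarith
  have hwk : w - (k:ℂ) ≠ 0 := by
    intro h0; rw [h0] at h; simp at h
  have hw1 : w + 1 ≠ 0 := by
    intro h0
    have := congrArg Complex.re h0
    simp only [add_re, one_re, zero_re] at this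
    have : (0:ℝ) ≤ (k:ℝ) := Nat.cast_nonneg k
    linarith
  have hBk : Complex.Gamma ((k:ℂ) + 1) ≠ 0 := by
    apply gammaNeZero'
    simp only [add_re, natCast_re, one_re]
    have : (0:ℝ) ≤ (k:ℝ) := Nat.cast_nonneg k
    linarith
  have hC : Complex.Gamma (w - k) ≠ 0 := gammaNeZero' h
  have e1 : Complex.Gamma (w + 1 + 1) = (w + 1) * Complex.Gamma (w + 1) :=
    Complex.Gamma_add_one _ hw1
  have e2 : Complex.Gamma (((k+1:ℕ):ℂ) + 1) = ((k:ℂ) + 1) * Complex.Gamma ((k:ℂ) + 1) := by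
    rw [show (((k+1:ℕ):ℂ) + 1) = ((k:ℂ) + 1) + 1 by push_cast; ring]
    exact Complex.Gamma_add_one _ hk
  have e3 : w - ((k+1:ℕ):ℂ) + 1 = w - k := by push_cast; ring
  have e4 : w + 1 - ((k+1:ℕ):ℂ) + 1 = (w - k) + 1 := by push_cast; ring
  have e5 : Complex.Gamma ((w - (k:ℂ)) + 1) = (w - k) * Complex.Gamma (w - k) :=
    Complex.Gamma_add_one _ hwk
  simp only [genBinom, e1, e2, e3, e4, e5]
  field_simp
  ring

lemma stepLemma (z : ℂ) (hz : 1 ≤ z.re) (n : ℕ) (y : ℂ) :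
    (∑ k ∈ range (n + 1 + 1), genBinom (z + ((n+1:ℕ):ℂ)) k * y ^ k * (1 - y) ^ (n + 1 - k))
      = (∑ k ∈ range (n + 1), genBinom (z + n) k * y ^ k * (1 - y) ^ (n - k))
        + genBinom (z + n) (n + 1) * y ^ (n + 1) := by
  have hzn : 0 < (z + (n:ℂ)).re + 1 := by
    simp only [add_re, natCast_re]
    have : (0:ℝ) ≤ (n:ℝ) := Nat.cast_nonneg n
    linarith
  have hre : ∀ j : ℕ, j ≤ n → 0 < (z + (n:ℂ) - (j:ℂ)).re := by
    intro j hj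
    simp only [add_re, sub_re, natCast_re]
    have : (j:ℝ) ≤ (n:ℝ) := Nat.cast_le.2 hj
    linarith
  have hzn1 : z + ((n+1:ℕ):ℂ) = (z + n) + 1 := by push_cast; ring
  set S := ∑ k ∈ range (n + 1), genBinom (z + n) k * y ^ k * (1 - y) ^ (n - k) with hS
  rw [hzn1, Finset.sum_range_succ']
  have hsplit : ∀ j ∈ range (n + 1),
      genBinom ((z + n) + 1) (j + 1) * y ^ (j + 1) * (1 - y) ^ (n + 1 - (j + 1))
        = genBinom (z + n) (j + 1) * y ^ (j + 1) * (1 - y) ^ (n - j)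
          + genBinom (z + n) j * y ^ (j + 1) * (1 - y) ^ (n - j) := by
    intro j hj
    rw [Nat.succ_sub_succ, genBinomPascal (hre j (Nat.lt_succ_iff.mp (mem_range.mp hj)))]
    ring
  rw [Finset.sum_congr rfl hsplit, Finset.sum_add_distrib]
  have hsum2 : (∑ j ∈ range (n + 1), genBinom (z + n) j * y ^ (j + 1) * (1 - y) ^ (n - j))
      = y * S := by
    rw [hS, Finset.mul_sum]
    exact Finset.sum_congr rfl fun j _ => by ring
  have hsum1 : (∑ j ∈ range (n + 1), genBinom (z + n) (j + 1) * y ^ (j + 1) * (1 - y) ^ (n - j))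
      = (1 - y) * S + genBinom (z + n) (n + 1) * y ^ (n + 1)
        - genBinom (z + n) 0 * (1 - y) ^ (n + 1) := by
    have h1 : (∑ k ∈ range (n + 1 + 1), genBinom (z + n) k * y ^ k * (1 - y) ^ (n + 1 - k))
        = (∑ j ∈ range (n + 1), genBinom (z + n) (j + 1) * y ^ (j + 1) * (1 - y) ^ (n - j))
          + genBinom (z + n) 0 * (1 - y) ^ (n + 1) := by
      rw [Finset.sum_range_succ']
      simp [Nat.succ_sub_succ]
    have h2 : (∑ k ∈ range (n + 1 + 1), genBinom (z + n) k * y ^ k * (1 - y) ^ (n + 1 - k))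
        = (1 - y) * S + genBinom (z + n) (n + 1) * y ^ (n + 1) := by
      rw [Finset.sum_range_succ, hS, Finset.mul_sum]
      congr 1
      · exact Finset.sum_congr rfl fun k hk => by
          rw [Nat.succ_sub (Nat.lt_succ_iff.mp (mem_range.mp hk)), pow_succ]
          ring
      · simp
    rw [h1] at h2
    linear_combination h2
  have hzero : genBinom ((z + n) + 1) 0 = genBinom (z + n) 0 := by
    rw [genBinomZero hzn, genBinomZero (by
      simp only [add_re, one_re, natCast_re]
      have : (0:ℝ) ≤ (n:ℝ) := Nat.cast_nonneg n
      linarith)]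
  rw [hsum1, hsum2, hzero]
  simp only [Nat.sub_zero, pow_zero, mul_one, one_mul, pow_succ]
  ring

theorem stmt2 (z : ℂ) (hz : 1 ≤ z.re) (ℓ : ℕ) (x : ℝ) (hx : x ∈ Set.Icc (0:ℝ) 1) :
    (∑ k ∈ range (ℓ + 1), genBinom (z + ℓ) k * (x : ℂ) ^ k * ((1 : ℂ) - x) ^ (ℓ - k))
      = ∑ k ∈ range (ℓ + 1), genBinom (z - 1 + k) k * (x : ℂ) ^ k := by
  induction ℓ with
  | zero =>
    have h1 : genBinom z 0 = 1 := genBinomZero (by linarith)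
    have h2 : genBinom (z - 1) 0 = 1 :=
      genBinomZero (by simp only [sub_re, one_re]; linarith)
    simp [h1, h2]
  | succ n ih =>
    calc (∑ k ∈ range (n + 1 + 1), genBinom (z + ((n+1:ℕ):ℂ)) k * (x:ℂ) ^ k
            * ((1:ℂ) - x) ^ (n + 1 - k))
        = (∑ k ∈ range (n + 1), genBinom (z + n) k * (x:ℂ) ^ k * ((1:ℂ) - x) ^ (n - k))
            + genBinom (z + n) (n + 1) * (x:ℂ) ^ (n + 1) := stepLemma z hz n x
      _ = (∑ k ∈ range (n + 1), genBinom (z - 1 + k) k * (x:ℂ) ^ k)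
            + genBinom (z - 1 + ((n+1:ℕ):ℂ)) (n + 1) * (x:ℂ) ^ (n + 1) := by
          rw [ih, show (z + (n:ℂ)) = z - 1 + ((n+1:ℕ):ℂ) by push_cast; ring]
      _ = ∑ k ∈ range (n + 1 + 1), genBinom (z - 1 + k) k * (x:ℂ) ^ k :=
          (Finset.sum_range_succ _ _).symm
end

section
/- Let z ∈ ℂ with Re z ≥ 1, ℓ ∈ ℕ₀, p(x) = Σ_{k=0}^{ℓ} C(z+ℓ, k) x^k (1-x)^{ℓ-k}, and q(x) = (1-x)^z p(x) for x ∈ (0,1). Then the derivative of q satisfies q'(x) = -(z+ℓ)·C(z-1+ℓ, ℓ)·x^ℓ (1-x)^{z-1}. -/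
open Complex Finset

lemma gb_sub (w : ℂ) (k : ℕ) (hw : w ≠ 0) (hk : w - k ≠ 0) :
    (w - k) * genBinom w k = w * genBinom (w - 1) k := by
  unfold genBinom
  rw [Complex.Gamma_add_one w hw,
      show w - (k:ℂ) + 1 = (w - k) + 1 from by ring,
      Complex.Gamma_add_one _ hk,
      show w - 1 + 1 = w from by ring,
      show w - 1 - (k:ℂ) + 1 = w - k from by ring,
      show Complex.Gamma ((k:ℂ)+1) * ((w - k) * Complex.Gamma (w - k))
        = (w - k) * (Complex.Gamma ((k:ℂ)+1) * Complex.Gamma (w - k)) from by ring,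
      ← mul_div_assoc, ← mul_div_assoc, mul_div_mul_left _ _ hk]

lemma gb_succ (w : ℂ) (k : ℕ) (hw : w ≠ 0) :
    ((k:ℂ) + 1) * genBinom w (k+1) = w * genBinom (w - 1) k := by
  have hk : ((k:ℂ) + 1) ≠ 0 := Nat.cast_add_one_ne_zero k
  unfold genBinom
  push_cast
  rw [Complex.Gamma_add_one w hw,
      Complex.Gamma_add_one ((k:ℂ)+1) hk,
      show w - ((k:ℂ)+1) + 1 = w - k from by ring,
      show w - 1 + 1 = w from by ring,
      show w - 1 - (k:ℂ) + 1 = w - k from by ring,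
      show ((k:ℂ)+1) * Complex.Gamma ((k:ℂ)+1) * Complex.Gamma (w - k)
        = ((k:ℂ)+1) * (Complex.Gamma ((k:ℂ)+1) * Complex.Gamma (w - k)) from by ring,
      ← mul_div_assoc, ← mul_div_assoc, mul_div_mul_left _ _ hk]

theorem stmt3 (z : ℂ) (hz : 1 ≤ z.re) (ℓ : ℕ) (x : ℝ) (hx : x ∈ Set.Ioo (0:ℝ) 1) :
    HasDerivAt
      (fun t : ℝ => Complex.exp (z * Real.log (1 - t)) *
        ∑ k ∈ range (ℓ + 1), genBinom (z + ℓ) k * (t : ℂ) ^ k * ((1 : ℂ) - t) ^ (ℓ - k))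
      (-(z + ℓ) * genBinom (z - 1 + ℓ) ℓ * (x : ℂ) ^ ℓ *
        Complex.exp ((z - 1) * Real.log (1 - x))) x := by
  obtain ⟨hx0, hx1⟩ := hx
  have h1x : (0:ℝ) < 1 - x := by linarith
  set L : ℂ := ((Real.log (1 - x) : ℝ) : ℂ) with hLdef
  set w : ℂ := z + (ℓ:ℂ) with hw
  -- basic nonvanishing facts
  have hwk : ∀ k : ℕ, k ≤ ℓ → w - (k:ℂ) ≠ 0 := by
    intro k hk h
    have h2 := congrArg Complex.re h
    rw [hw] at h2
    simp [Complex.sub_re, Complex.add_re, Complex.natCast_re] at h2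
    have hkl : (k:ℝ) ≤ (ℓ:ℝ) := Nat.cast_le.mpr hk
    linarith
  have hw0 : w ≠ 0 := by
    have := hwk 0 (Nat.zero_le _)
    simpa using this
  -- derivative of the log
  have hlog : HasDerivAt (fun t : ℝ => Real.log (1 - t)) (-(1 - x)⁻¹) x := by
    have h1 : HasDerivAt (fun t : ℝ => 1 - t) (-1) x := by
      simpa using (hasDerivAt_id x).const_sub 1
    have h2 := (Real.hasDerivAt_log (ne_of_gt h1x)).comp x h1
    rw [show -(1 - x)⁻¹ = (1 - x)⁻¹ * -1 by ring]
    exact h2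
  have hL : HasDerivAt (fun t : ℝ => ((Real.log (1 - t) : ℝ) : ℂ)) ((-(1 - x)⁻¹ : ℝ) : ℂ) x :=
    hlog.ofReal_comp
  have hid : HasDerivAt (fun t : ℝ => (t : ℂ)) 1 x := by
    simpa using (hasDerivAt_id x).ofReal_comp
  -- helper facts
  have hoX : ((1 - x : ℝ) : ℂ) = Complex.exp L := by
    rw [hLdef, ← Complex.ofReal_exp, Real.exp_log h1x]
  have hinvc : ((-(1 - x)⁻¹ : ℝ) : ℂ) = -Complex.exp (-L) := by
    rw [Complex.ofReal_neg, Complex.ofReal_inv, hoX, ← Complex.exp_neg]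
  have hmul : ∀ a : ℂ, Complex.exp (a * L) * Complex.exp (-L) = Complex.exp ((a - 1) * L) := by
    intro a
    rw [← Complex.exp_add]
    congr 1
    ring
  -- the per-term derivatives
  have hterm : ∀ k ∈ range (ℓ + 1), HasDerivAt
      (fun t : ℝ => genBinom w k *
        (Complex.exp ((z + ((ℓ - k : ℕ) : ℂ)) * ((Real.log (1 - t) : ℝ) : ℂ)) * (t:ℂ)^k))
      (genBinom w k *
        (Complex.exp ((z + ((ℓ - k : ℕ) : ℂ)) * L) * ((z + ((ℓ - k : ℕ) : ℂ)) * ((-(1 - x)⁻¹ : ℝ) : ℂ)) * (x:ℂ)^k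
        + Complex.exp ((z + ((ℓ - k : ℕ) : ℂ)) * L) * ((k:ℂ) * (x:ℂ)^(k-1)))) x := by
    intro k hk
    have hexp : HasDerivAt
        (fun t : ℝ => Complex.exp ((z + ((ℓ - k : ℕ) : ℂ)) * ((Real.log (1 - t) : ℝ) : ℂ)))
        (Complex.exp ((z + ((ℓ - k : ℕ) : ℂ)) * L) * ((z + ((ℓ - k : ℕ) : ℂ)) * ((-(1 - x)⁻¹ : ℝ) : ℂ))) x :=
      (hL.const_mul _).cexp
    have hpow : HasDerivAt (fun t : ℝ => (t:ℂ)^k) ((k:ℂ) * (x:ℂ)^(k-1)) x := by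
      have h := (hasDerivAt_pow k x).ofReal_comp
      simpa using h
    exact (hexp.mul hpow).const_mul _
  have hsum := HasDerivAt.fun_sum hterm
  -- the original function agrees with the sum of exponentials near x
  have heq : (fun t : ℝ => Complex.exp (z * Real.log (1 - t)) *
        ∑ k ∈ range (ℓ + 1), genBinom w k * (t : ℂ) ^ k * ((1 : ℂ) - t) ^ (ℓ - k))
      =ᶠ[nhds x] (fun t : ℝ => ∑ k ∈ range (ℓ + 1), genBinom w k *
        (Complex.exp ((z + ((ℓ - k : ℕ) : ℂ)) * ((Real.log (1 - t) : ℝ) : ℂ)) * (t:ℂ)^k)) := by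
    filter_upwards [Ioo_mem_nhds hx0 hx1] with t ht
    obtain ⟨ht0, ht1⟩ := ht
    have h1t : (0:ℝ) < 1 - t := by linarith
    rw [Finset.mul_sum]
    refine Finset.sum_congr rfl fun k hk => ?_
    have hone : ((1:ℂ) - (t:ℂ)) = Complex.exp (((Real.log (1 - t) : ℝ) : ℂ)) := by
      rw [← Complex.ofReal_exp, Real.exp_log h1t]
      push_cast
      ring
    rw [hone, ← Complex.exp_nat_mul, add_mul, Complex.exp_add]
    ring
  have Hd := hsum.congr_of_eventuallyEq heq
  -- now show the computed derivative equals the claimed one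
  have key : (∑ k ∈ range (ℓ + 1), genBinom w k *
        (Complex.exp ((z + ((ℓ - k : ℕ) : ℂ)) * L) * ((z + ((ℓ - k : ℕ) : ℂ)) * ((-(1 - x)⁻¹ : ℝ) : ℂ)) * (x:ℂ)^k
        + Complex.exp ((z + ((ℓ - k : ℕ) : ℂ)) * L) * ((k:ℂ) * (x:ℂ)^(k-1))))
      = -(z + ℓ) * genBinom (z - 1 + ℓ) ℓ * (x : ℂ) ^ ℓ * Complex.exp ((z - 1) * L) := by
    have hb : ∀ k ∈ range (ℓ + 1),
        genBinom w k * (Complex.exp ((z + ((ℓ - k : ℕ) : ℂ)) * L) * ((z + ((ℓ - k : ℕ) : ℂ)) * ((-(1 - x)⁻¹ : ℝ) : ℂ)) * (x:ℂ)^k)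
          = -(w * (genBinom (w - 1) k * (x:ℂ)^k * Complex.exp ((z - 1 + ((ℓ - k : ℕ) : ℂ)) * L))) := by
      intro k hk
      have hkl : k ≤ ℓ := Nat.lt_succ_iff.mp (Finset.mem_range.mp hk)
      rw [hinvc, Nat.cast_sub hkl,
          show z + ((ℓ:ℂ) - k) = w - k from by rw [hw]; ring,
          show z - 1 + ((ℓ:ℂ) - k) = w - k - 1 from by rw [hw]; ring,
          show w * (genBinom (w - 1) k * (x:ℂ)^k * Complex.exp ((w - k - 1) * L))
            = (w * genBinom (w - 1) k) * ((x:ℂ)^k * Complex.exp ((w - k - 1) * L)) from by ring,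
          ← gb_sub w k hw0 (hwk k hkl), ← hmul (w - k)]
      ring
    rw [Finset.sum_congr rfl (fun k hk => by
      rw [mul_add, hb k hk])]
    rw [Finset.sum_add_distrib, Finset.sum_range_succ, Finset.sum_range_succ']
    have hQ0 : genBinom w 0 * (Complex.exp ((z + ((ℓ - 0 : ℕ) : ℂ)) * L) * (((0:ℕ):ℂ) * (x:ℂ)^(0-1))) = 0 := by
      simp
    have hQ : ∀ j ∈ range ℓ,
        genBinom w (j+1) * (Complex.exp ((z + ((ℓ - (j+1) : ℕ) : ℂ)) * L) * (((j+1:ℕ):ℂ) * (x:ℂ)^(j+1-1)))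
          = w * (genBinom (w - 1) j * (x:ℂ)^j * Complex.exp ((z - 1 + ((ℓ - j : ℕ) : ℂ)) * L)) := by
      intro j hj
      have hj1 : j + 1 ≤ ℓ := Finset.mem_range.mp hj
      have hjl : j ≤ ℓ := Nat.le_of_succ_le hj1
      rw [Nat.cast_sub hj1, Nat.cast_sub hjl,
          show z + ((ℓ:ℂ) - ((j+1:ℕ):ℂ)) = z - 1 + ((ℓ:ℂ) - j) from by push_cast; ring,
          show w * (genBinom (w - 1) j * (x:ℂ)^j * Complex.exp ((z - 1 + ((ℓ:ℂ) - j)) * L))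
            = (w * genBinom (w - 1) j) * ((x:ℂ)^j * Complex.exp ((z - 1 + ((ℓ:ℂ) - j)) * L)) from by ring,
          ← gb_succ w j hw0]
      push_cast
      ring
    have eQ : (∑ j ∈ range ℓ,
          genBinom w (j+1) * (Complex.exp ((z + ((ℓ - (j+1) : ℕ) : ℂ)) * L) * (((j+1:ℕ):ℂ) * (x:ℂ)^(j+1-1))))
        = ∑ j ∈ range ℓ,
          w * (genBinom (w - 1) j * (x:ℂ)^j * Complex.exp ((z - 1 + ((ℓ - j : ℕ) : ℂ)) * L)) :=
      Finset.sum_congr rfl hQ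
    rw [eQ, hQ0]
    have hsum0 : ∑ j ∈ range ℓ,
          -(w * (genBinom (w - 1) j * (x:ℂ)^j * Complex.exp ((z - 1 + ((ℓ - j : ℕ) : ℂ)) * L)))
        + ∑ j ∈ range ℓ,
          w * (genBinom (w - 1) j * (x:ℂ)^j * Complex.exp ((z - 1 + ((ℓ - j : ℕ) : ℂ)) * L)) = 0 := by
      rw [← Finset.sum_add_distrib]
      simp
    rw [show ∀ a b c : ℂ, a + -(w*b) + (c + 0) = (a + c) + -(w*b) from by intros; ring]
    rw [hsum0]
    rw [Nat.sub_self]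
    rw [show w - 1 = z - 1 + (ℓ:ℂ) from by rw [hw]; ring]
    push_cast
    rw [hw]
    ring
  rw [← key]
  exact Hd
end

section
/- Let z ∈ ℂ with α := Re z ≥ 1, ℓ an integer with 0 ≤ ℓ ≤ ⌊α - 1/2⌋, and s(x) = |q(x)|² + |q(1-x)|² as above. Then the derivative of s equals s'(x) = Σ_{k=0}^{ℓ} 2 Re(A_k) [ (1-x)^{ℓ+k} x^{2α-1} - x^{ℓ+k} (1-x)^{2α-1} ] for x ∈ (0,1), where A_k = (z+ℓ)·C(z-1+ℓ, ℓ)·conj(C(z-1+k, k)). -/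
open Complex Finset Real

/-- `q(x) = (1-x)^z ∑_{k=0}^ℓ C(z+ℓ,k) x^k (1-x)^{ℓ-k}`. -/
noncomputable def qfun (z : ℂ) (ℓ : ℕ) (x : ℝ) : ℂ :=
  (((1 - x : ℝ) : ℂ)) ^ z *
    ∑ k ∈ range (ℓ + 1), genBinom (z + ℓ) k * (x : ℂ) ^ k * ((1 : ℂ) - x) ^ (ℓ - k)

/-- `s(x) = |q(x)|² + |q(1-x)|²`. -/
noncomputable def sfun (z : ℂ) (ℓ : ℕ) (x : ℝ) : ℝ :=
  ‖qfun z ℓ x‖ ^ 2 + ‖qfun z ℓ (1 - x)‖ ^ 2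

lemma Gamma_ne_zero' {w : ℂ} (hw : 0 < w.re) : Complex.Gamma w ≠ 0 := by
  apply Complex.Gamma_ne_zero
  intro m hm
  rw [hm] at hw
  simp at hw
  exact absurd hw (by positivity : (0:ℝ) ≤ (m:ℝ)).not_gt

lemma genBinom_zero {w : ℂ} (hw : 0 < (w+1).re) : genBinom w 0 = 1 := by
  unfold genBinom
  simp only [Nat.cast_zero, Complex.Gamma_one, sub_zero, zero_add, one_mul]
  exact div_self (Gamma_ne_zero' hw)

lemma genBinom_pascal {a : ℂ} {k : ℕ} (h : 0 < (a - (k+1:ℕ)).re) :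
    genBinom a (k+1) = genBinom (a-1) (k+1) + genBinom (a-1) k := by
  have h' : (k:ℝ) + 1 < a.re := by push_cast at h; simp at h; linarith
  have hb : (0:ℝ) < (a - ((k:ℂ)+1)).re := by simp; push_cast; linarith
  have hbne : a - ((k:ℂ)+1) ≠ 0 := by
    intro hh; rw [hh] at hb; simp at hb
  have ha : (0:ℝ) < a.re := by nlinarith [Nat.cast_nonneg (α := ℝ) k]
  have hane : a ≠ 0 := by intro hh; rw [hh] at ha; simp at ha
  have hG1 : Complex.Gamma (a - ((k:ℂ)+1)) ≠ 0 := Gamma_ne_zero' hb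
  have hGk : Complex.Gamma ((k:ℂ)+1) ≠ 0 := Gamma_ne_zero' (by simp; positivity)
  have hGa : Complex.Gamma a ≠ 0 := Gamma_ne_zero' ha
  have e1 : Complex.Gamma (a+1) = a * Complex.Gamma a := Complex.Gamma_add_one a hane
  have e2 : Complex.Gamma (a - ((k:ℂ)+1) + 1) = (a - ((k:ℂ)+1)) * Complex.Gamma (a - ((k:ℂ)+1)) :=
    Complex.Gamma_add_one _ hbne
  have e3 : Complex.Gamma ((k:ℂ)+1+1) = ((k:ℂ)+1) * Complex.Gamma ((k:ℂ)+1) :=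
    Complex.Gamma_add_one _ (by intro hh; have := congrArg Complex.re hh; simp at this; linarith [Nat.cast_nonneg (α := ℝ) k])
  have hk1 : ((k:ℂ)+1) ≠ 0 := by
    intro hh; have := congrArg Complex.re hh; simp at this; linarith [Nat.cast_nonneg (α := ℝ) k]
  unfold genBinom
  push_cast
  have r1 : a - ((k:ℂ)+1) + 1 = a - k := by ring
  have r2 : a - 1 - ((k:ℂ)+1) + 1 = a - ((k:ℂ)+1) := by ring
  have r3 : a - 1 - (k:ℂ) + 1 = a - ((k:ℂ)+1) + 1 := by ring
  have r4 : a - 1 + 1 = a := by ring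
  rw [r2, r3, r4, e1, e2, e3]
  field_simp
  ring

lemma genBinom_congr {w w' : ℂ} (h : w = w') (k : ℕ) : genBinom w k = genBinom w' k := by rw [h]

lemma key_identity (w : ℂ) : ∀ m : ℕ, (m:ℝ) + 1 ≤ w.re → ∀ X : ℂ,
    ∑ k ∈ range (m+1), genBinom w k * X^k * (1-X)^(m-k)
      = ∑ k ∈ range (m+1), genBinom (w - (m:ℂ) - 1 + k) k * X^k := by
  intro m
  induction m with
  | zero =>
    intro hm X
    simp only [zero_add, Finset.sum_range_one, pow_zero, Nat.cast_zero, mul_one, one_mul,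
      Nat.sub_self]
    rw [genBinom_zero (by simp; linarith), genBinom_zero (by simp; linarith)]
  | succ m ih =>
    intro hm X
    have hm2 : (m:ℝ) + 2 ≤ w.re := by push_cast at hm; linarith
    have hm' : (m:ℝ) + 1 ≤ w.re := by linarith
    rw [Finset.sum_range_succ]
    have e0 : ∀ k ∈ range (m+1), genBinom w k * X^k * (1-X)^(m+1-k)
        = (genBinom w k * X^k * (1-X)^(m-k)) * (1-X) := by
      intro k hk
      have hk' : k ≤ m := Nat.lt_succ_iff.mp (mem_range.mp hk)
      rw [show m+1-k = (m-k)+1 from by omega, pow_succ]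
      ring
    rw [Finset.sum_congr rfl e0, ← Finset.sum_mul, ih hm' X]
    set c : ℕ → ℂ := fun k => genBinom (w - (m:ℂ) - 1 + k) k with hc
    have hd : ∀ k : ℕ, genBinom (w - ((m:ℕ)+1:ℂ) - 1 + k) k
        = genBinom (w - (m:ℂ) - 2 + k) k := by
      intro k; exact genBinom_congr (by push_cast; ring) k
    have pas : ∀ k : ℕ, genBinom (w - (m:ℂ) - 2 + ((k+1:ℕ):ℂ)) (k+1) = c (k+1) - c k := by
      intro k
      have h := genBinom_pascal (a := w - (m:ℂ) - 1 + ((k+1:ℕ):ℂ)) (k := k)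
        (by push_cast; simp; linarith)
      have h1 : genBinom (w - (m:ℂ) - 1 + ((k+1:ℕ):ℂ) - 1) (k+1)
          = genBinom (w - (m:ℂ) - 2 + ((k+1:ℕ):ℂ)) (k+1) := genBinom_congr (by push_cast; ring) _
      have h2 : genBinom (w - (m:ℂ) - 1 + ((k+1:ℕ):ℂ) - 1) k
          = genBinom (w - (m:ℂ) - 1 + ((k:ℕ):ℂ)) k := genBinom_congr (by push_cast; ring) _
      rw [h1, h2] at h
      simp only [hc]
      linear_combination -h
    have E1 := Finset.sum_range_succ' (fun k => c k * X^k) (m+1)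
    have E2 := Finset.sum_range_succ (fun k => c k * X^k) (m+1)
    have hc0 : c 0 = 1 := by
      simp only [hc, Nat.cast_zero, add_zero]
      exact genBinom_zero (by simp; linarith)
    have hcm : genBinom w (m+1) = c (m+1) := by
      refine (genBinom_congr ?_ _).symm; push_cast; ring
    have hRHS : ∑ k ∈ range (m+1+1), genBinom (w - ((m:ℕ)+1:ℂ) - 1 + k) k * X^k
        = ∑ k ∈ range (m+1), (c (k+1) - c k) * X^(k+1) + 1 := by
      rw [Finset.sum_range_succ' _ (m+1)]
      congr 1
      · exact Finset.sum_congr rfl fun k _ => by rw [hd (k+1), pas k]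
      · have h0 := hd 0
        simp only [Nat.cast_zero, add_zero] at h0
        simp only [Nat.cast_zero, add_zero, pow_zero, mul_one]
        rw [h0]
        exact genBinom_zero (by simp; linarith)
    push_cast at hRHS ⊢
    rw [hRHS]
    have hsplit : ∑ k ∈ range (m+1), (c (k+1) - c k) * X^(k+1)
        = ∑ k ∈ range (m+1), c (k+1) * X^(k+1) - ∑ k ∈ range (m+1), c k * X^(k+1) := by
      rw [← Finset.sum_sub_distrib]; exact Finset.sum_congr rfl fun k _ => by ring
    have hmulX : (∑ k ∈ range (m+1), c k * X^k) * X = ∑ k ∈ range (m+1), c k * X^(k+1) := by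
      rw [Finset.sum_mul]; exact Finset.sum_congr rfl fun k _ => by rw [pow_succ]; ring
    rw [hsplit, hcm]
    simp only [hc, Nat.sub_self, pow_zero, mul_one, Nat.cast_zero, add_zero] at E1 E2 hc0 hmulX ⊢
    linear_combination E1 - E2 - hmulX + hc0

-- recurrence
lemma genBinom_rec {z : ℂ} (hz : 1 ≤ z.re) (k : ℕ) :
    ((k:ℂ)+1) * genBinom (z - 1 + ((k+1:ℕ):ℂ)) (k+1) = (z + k) * genBinom (z - 1 + (k:ℂ)) k := by
  have hzk : z + (k:ℂ) ≠ 0 := by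
    intro h; have := congrArg Complex.re h; simp at this; linarith [Nat.cast_nonneg (α := ℝ) k]
  have hk1 : ((k:ℂ)+1) ≠ 0 := by
    intro h; have := congrArg Complex.re h; simp at this; linarith [Nat.cast_nonneg (α := ℝ) k]
  have hGz : Complex.Gamma z ≠ 0 := Gamma_ne_zero' (by linarith)
  have hGk : Complex.Gamma ((k:ℂ)+1) ≠ 0 := Gamma_ne_zero' (by simp; positivity)
  have e1 : Complex.Gamma (z + k + 1) = (z + k) * Complex.Gamma (z + k) :=
    Complex.Gamma_add_one _ hzk
  have e2 : Complex.Gamma ((k:ℂ)+1+1) = ((k:ℂ)+1) * Complex.Gamma ((k:ℂ)+1) :=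
    Complex.Gamma_add_one _ hk1
  unfold genBinom
  push_cast
  rw [show z - 1 + ((k:ℂ)+1) + 1 = z + k + 1 by ring,
      show z - 1 + ((k:ℂ)+1) - ((k:ℂ)+1) + 1 = z by ring,
      show z - 1 + (k:ℂ) + 1 = z + k by ring,
      show z - 1 + (k:ℂ) - (k:ℂ) + 1 = z by ring, e1, e2]
  field_simp

-- telescoping
lemma tele {z : ℂ} (hz : 1 ≤ z.re) (ℓ : ℕ) (X : ℂ) :
    (1-X) * (∑ k ∈ range (ℓ+1), genBinom (z-1+(k:ℂ)) k * ((k:ℂ) * X^(k-1)))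
      - z * ∑ k ∈ range (ℓ+1), genBinom (z-1+(k:ℂ)) k * X^k
    = -((z+(ℓ:ℂ)) * genBinom (z-1+(ℓ:ℂ)) ℓ * X^ℓ) := by
  induction ℓ with
  | zero => simp
  | succ n ih =>
    rw [Finset.sum_range_succ (fun k => genBinom (z-1+(k:ℂ)) k * ((k:ℂ) * X^(k-1))) (n+1),
        Finset.sum_range_succ (fun k => genBinom (z-1+(k:ℂ)) k * X^k) (n+1)]
    have hrec := genBinom_rec hz n
    push_cast at hrec ⊢
    linear_combination ih + X^n * hrec

lemma qfun_eq {z : ℂ} (hz : 1 ≤ z.re) (ℓ : ℕ) (x : ℝ) :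
    qfun z ℓ x
      = (((1 - x : ℝ) : ℂ)) ^ z * ∑ k ∈ range (ℓ + 1), genBinom (z - 1 + (k:ℂ)) k * (x:ℂ)^k := by
  unfold qfun
  congr 1
  rw [key_identity (z + ℓ) ℓ (by simp; linarith) (x:ℂ)]
  refine Finset.sum_congr rfl fun k _ => ?_
  rw [genBinom_congr (show z + (ℓ:ℂ) - (ℓ:ℂ) - 1 + (k:ℂ) = z - 1 + (k:ℂ) from by ring) k]

lemma hasDerivAt_qfun {z : ℂ} (hz : 1 ≤ z.re) (ℓ : ℕ) {x : ℝ} (hx0 : 0 < x) (hx1 : x < 1) :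
    HasDerivAt (qfun z ℓ)
      (-((z + (ℓ:ℂ)) * genBinom (z - 1 + (ℓ:ℂ)) ℓ * (x:ℂ)^ℓ * (((1-x:ℝ):ℂ)) ^ (z-1))) x := by
  have hb : HasDerivAt (fun w : ℂ => 1 - w) (-1 : ℂ) (x:ℂ) :=
    (hasDerivAt_id (x:ℂ)).const_sub 1
  have hslit : (1 - (x:ℂ)) ∈ Complex.slitPlane := by
    rw [Complex.mem_slitPlane_iff]; left; simp; linarith
  have V : HasDerivAt (fun w : ℂ => (1 - w) ^ z) (z * (1 - (x:ℂ)) ^ (z-1) * (-1)) (x:ℂ) :=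
    hb.cpow_const hslit
  have U : HasDerivAt (fun w : ℂ => ∑ k ∈ range (ℓ+1), genBinom (z-1+(k:ℂ)) k * w^k)
      (∑ k ∈ range (ℓ+1), genBinom (z-1+(k:ℂ)) k * ((k:ℂ) * (x:ℂ)^(k-1))) (x:ℂ) := by
    apply HasDerivAt.fun_sum
    intro k _
    exact (hasDerivAt_pow k (x:ℂ)).const_mul _
  have hq := (V.fun_mul U).comp_ofReal
  have hfun : (fun y : ℝ => (1 - (y:ℂ))^z
      * ∑ k ∈ range (ℓ+1), genBinom (z-1+(k:ℂ)) k * ((y:ℝ):ℂ)^k) = qfun z ℓ := by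
    funext y; rw [qfun_eq hz ℓ y]; push_cast; ring
  rw [hfun] at hq
  convert hq using 1
  have h1x : ((1-x:ℝ):ℂ) = 1 - (x:ℂ) := by push_cast; ring
  have hne : (1 - (x:ℂ)) ≠ 0 := by
    intro h; have := congrArg Complex.re h; simp at this; linarith
  have hYz : (1 - (x:ℂ))^z = (1 - (x:ℂ))^(z-1) * (1 - (x:ℂ)) := by
    nth_rewrite 1 [show z = (z-1) + 1 from by ring]
    rw [Complex.cpow_add _ _ hne, Complex.cpow_one]
  have ht := tele hz ℓ (x:ℂ)
  rw [h1x, hYz]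
  linear_combination (-((1 - (x:ℂ))^(z-1))) * ht

lemma conj_ofReal_cpow {r : ℝ} (hr : 0 < r) (w : ℂ) :
    (starRingEnd ℂ) ((r:ℂ) ^ w) = (r:ℂ) ^ ((starRingEnd ℂ) w) := by
  have hne : (r:ℂ) ≠ 0 := by exact_mod_cast hr.ne'
  rw [Complex.cpow_def_of_ne_zero hne, Complex.cpow_def_of_ne_zero hne, ← Complex.exp_conj,
    map_mul]
  congr 1
  rw [← Complex.ofReal_log hr.le, Complex.conj_ofReal]

lemma hasDerivAt_normSq_comp {f : ℝ → ℂ} {f' : ℂ} {x : ℝ} (hf : HasDerivAt f f' x) :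
    HasDerivAt (fun y => Complex.normSq (f y)) (2 * ((starRingEnd ℂ) (f x) * f').re) x := by
  have hc : HasDerivAt (fun y => (starRingEnd ℂ) (f y)) ((starRingEnd ℂ) f') x := by
    simpa [RCLike.star_def] using hf.star
  have hm := hf.fun_mul hc
  have hre := (Complex.reCLM.hasFDerivAt).comp_hasDerivAt x hm
  have hfun : (fun y => Complex.reCLM (f y * (starRingEnd ℂ) (f y)))
      = fun y => Complex.normSq (f y) := by
    funext y
    simp [Complex.mul_conj]
  simp only [Function.comp_def] at hre
  rw [hfun] at hre
  refine hre.congr_deriv ?_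
  simp only [Complex.reCLM_apply, Complex.add_re]
  have h2 : (f x * (starRingEnd ℂ) f').re = ((starRingEnd ℂ) (f x) * f').re := by
    rw [show f x * (starRingEnd ℂ) f' = (starRingEnd ℂ) ((starRingEnd ℂ) (f x) * f') by
      rw [map_mul, Complex.conj_conj], Complex.conj_re]
  rw [h2, show f' * (starRingEnd ℂ) (f x) = (starRingEnd ℂ) (f x) * f' from mul_comm _ _]
  ring

lemma branch {z : ℂ} (hz : 1 ≤ z.re) (ℓ : ℕ) {x : ℝ} (hx0 : 0 < x) (hx1 : x < 1) :
    (starRingEnd ℂ) (qfun z ℓ x)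
        * (-((z + (ℓ:ℕ)) * genBinom (z - 1 + (ℓ:ℂ)) ℓ * (x:ℂ)^ℓ * (((1-x:ℝ):ℂ)) ^ (z-1)))
      = ∑ k ∈ range (ℓ+1), ((x^(ℓ+k) * (1-x)^(2*z.re-1) : ℝ) : ℂ) *
          (-((z + (ℓ:ℕ)) * genBinom (z - 1 + (ℓ:ℂ)) ℓ
              * (starRingEnd ℂ) (genBinom (z - 1 + (k:ℂ)) k))) := by
  have h1pos : 0 < 1 - x := by linarith
  have hne : ((1-x:ℝ):ℂ) ≠ 0 := by exact_mod_cast h1pos.ne'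
  have hmerge : ((1-x:ℝ):ℂ)^((starRingEnd ℂ) z) * ((1-x:ℝ):ℂ)^(z-1)
      = (((1-x)^(2*z.re-1) : ℝ) : ℂ) := by
    rw [← Complex.cpow_add _ _ hne, Complex.ofReal_cpow h1pos.le]
    congr 1
    have h := Complex.add_conj z
    push_cast at h ⊢
    linear_combination h
  rw [qfun_eq hz ℓ x, map_mul, map_sum, conj_ofReal_cpow h1pos z]
  rw [show ((1-x:ℝ):ℂ)^((starRingEnd ℂ) z)
        * (∑ k ∈ range (ℓ+1), (starRingEnd ℂ) (genBinom (z - 1 + (k:ℂ)) k * (x:ℂ)^k))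
        * (-((z + (ℓ:ℕ)) * genBinom (z - 1 + (ℓ:ℂ)) ℓ * (x:ℂ)^ℓ * (((1-x:ℝ):ℂ)) ^ (z-1)))
      = ∑ k ∈ range (ℓ+1), (starRingEnd ℂ) (genBinom (z - 1 + (k:ℂ)) k * (x:ℂ)^k)
        * (((1-x:ℝ):ℂ)^((starRingEnd ℂ) z)
            * (-((z + (ℓ:ℕ)) * genBinom (z - 1 + (ℓ:ℂ)) ℓ * (x:ℂ)^ℓ * (((1-x:ℝ):ℂ)) ^ (z-1))))
      from by rw [← Finset.sum_mul]; ring]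
  refine Finset.sum_congr rfl fun k _ => ?_
  rw [map_mul, show (starRingEnd ℂ) ((x:ℂ)^k) = (x:ℂ)^k from by
    rw [← Complex.ofReal_pow, Complex.conj_ofReal]]
  push_cast at hmerge ⊢
  linear_combination (-((starRingEnd ℂ) (genBinom (z - 1 + (k:ℂ)) k) * (z + (ℓ:ℂ))
    * genBinom (z - 1 + (ℓ:ℂ)) ℓ * (x:ℂ)^k * (x:ℂ)^ℓ)) * hmerge

theorem stmt7 (z : ℂ) (hz : 1 ≤ z.re) (ℓ : ℕ) (hℓ : (ℓ : ℝ) ≤ z.re - 1 / 2)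
    (x : ℝ) (hx : x ∈ Set.Ioo (0:ℝ) 1) :
    HasDerivAt (sfun z ℓ)
      (∑ k ∈ range (ℓ + 1),
        2 * ((z + ℓ) * genBinom (z - 1 + ℓ) ℓ * starRingEnd ℂ (genBinom (z - 1 + k) k)).re *
          ((1 - x) ^ (ℓ + k) * x ^ (2 * z.re - 1) - x ^ (ℓ + k) * (1 - x) ^ (2 * z.re - 1)))
      x := by
  obtain ⟨hx0, hx1⟩ := hx
  have h1x0 : (0:ℝ) < 1 - x := by linarith
  have h1x1 : 1 - x < 1 := by linarith
  have hQ1 := hasDerivAt_qfun hz ℓ hx0 hx1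
  have hinner : HasDerivAt (fun y : ℝ => 1 - y) (-1 : ℝ) x := by
    simpa using (hasDerivAt_id x).const_sub 1
  have hQ2' := hasDerivAt_qfun hz ℓ h1x0 h1x1
  have hQ2 : HasDerivAt (fun y : ℝ => qfun z ℓ (1 - y))
      ((z + (ℓ:ℕ)) * genBinom (z - 1 + (ℓ:ℂ)) ℓ * ((1-x:ℝ):ℂ)^ℓ * ((x:ℝ):ℂ)^(z-1)) x := by
    have h := hQ2'.scomp x hinner
    simp only [Function.comp_def, sub_sub_cancel] at h
    refine h.congr_deriv ?_
    simp [sub_sub_cancel]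
  have hs1 := hasDerivAt_normSq_comp hQ1
  have hs2 := hasDerivAt_normSq_comp hQ2
  have htot := hs1.fun_add hs2
  have hsf : (fun y => Complex.normSq (qfun z ℓ y) + Complex.normSq (qfun z ℓ (1-y)))
      = sfun z ℓ := by
    funext y; unfold sfun; rw [Complex.sq_norm, Complex.sq_norm]
  rw [hsf] at htot
  refine htot.congr_deriv ?_
  have hb1 := branch hz ℓ hx0 hx1
  have hE2 : (starRingEnd ℂ) (qfun z ℓ (1-x))
      * ((z + (ℓ:ℕ)) * genBinom (z - 1 + (ℓ:ℂ)) ℓ * ((1-x:ℝ):ℂ)^ℓ * ((x:ℝ):ℂ)^(z-1))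
      = ∑ k ∈ range (ℓ+1), (((1-x)^(ℓ+k) * x^(2*z.re-1) : ℝ) : ℂ) *
          ((z + (ℓ:ℕ)) * genBinom (z - 1 + (ℓ:ℂ)) ℓ
              * (starRingEnd ℂ) (genBinom (z - 1 + (k:ℂ)) k)) := by
    have h := branch hz ℓ h1x0 h1x1
    simp only [sub_sub_cancel] at h
    rw [show (starRingEnd ℂ) (qfun z ℓ (1-x))
        * ((z + (ℓ:ℕ)) * genBinom (z - 1 + (ℓ:ℂ)) ℓ * ((1-x:ℝ):ℂ)^ℓ * ((x:ℝ):ℂ)^(z-1))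
      = -((starRingEnd ℂ) (qfun z ℓ (1-x))
        * (-((z + (ℓ:ℕ)) * genBinom (z - 1 + (ℓ:ℂ)) ℓ * ((1-x:ℝ):ℂ)^ℓ * ((x:ℝ):ℂ)^(z-1))))
      from by ring, h, ← Finset.sum_neg_distrib]
    exact Finset.sum_congr rfl fun k _ => by ring
  rw [hb1, hE2, Complex.re_sum, Complex.re_sum, Finset.mul_sum, Finset.mul_sum,
    ← Finset.sum_add_distrib]
  refine Finset.sum_congr rfl fun k _ => ?_
  rw [show (((x^(ℓ+k) * (1-x)^(2*z.re-1) : ℝ) : ℂ) *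
      (-((z + (ℓ:ℕ)) * genBinom (z - 1 + (ℓ:ℂ)) ℓ
        * (starRingEnd ℂ) (genBinom (z - 1 + (k:ℂ)) k)))).re
    = (x^(ℓ+k) * (1-x)^(2*z.re-1)) * (-((z + (ℓ:ℕ)) * genBinom (z - 1 + (ℓ:ℂ)) ℓ
        * (starRingEnd ℂ) (genBinom (z - 1 + (k:ℂ)) k))).re from Complex.re_ofReal_mul _ _,
    show ((((1-x)^(ℓ+k) * x^(2*z.re-1) : ℝ) : ℂ) *
      ((z + (ℓ:ℕ)) * genBinom (z - 1 + (ℓ:ℂ)) ℓ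
        * (starRingEnd ℂ) (genBinom (z - 1 + (k:ℂ)) k))).re
    = ((1-x)^(ℓ+k) * x^(2*z.re-1)) * ((z + (ℓ:ℕ)) * genBinom (z - 1 + (ℓ:ℂ)) ℓ
        * (starRingEnd ℂ) (genBinom (z - 1 + (k:ℂ)) k)).re from Complex.re_ofReal_mul _ _,
    Complex.neg_re]
  ring
end

section
/- Let z ∈ ℂ with α := Re z ≥ 1 and ℓ ∈ ℕ₀, and let H₀(x) = (1-x)^z Σ_{k=0}^{ℓ} C(z+ℓ, k) (1-x)^{ℓ-k} x^k for x ∈ [0,1]. Then there exists a constant C > 0 such that |H₀(x) - 1| ≤ C·x for all x ∈ [0,1]. -/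
set_option maxHeartbeats 1000000


open Complex Finset

/-- The pseudo-spline filter in the variable `x = sin²πγ`:
`H₀(x) = (1-x)^z ∑_{k=0}^ℓ C(z+ℓ,k) (1-x)^{ℓ-k} x^k`, with `(1-x)^z` the principal
complex power (equal to `exp (z log(1-x))` for `x < 1` and `0` at `x = 1`). -/
noncomputable def filterX (z : ℂ) (ℓ : ℕ) (x : ℝ) : ℂ :=
  (((1 - x : ℝ) : ℂ)) ^ z *
    ∑ k ∈ range (ℓ + 1), genBinom (z + ℓ) k * ((1 : ℂ) - x) ^ (ℓ - k) * (x : ℂ) ^ k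

/-- `C(z+ℓ, 0) = 1`. -/
lemma genBinom_zero_s9 (z : ℂ) (hz : 1 ≤ z.re) (ℓ : ℕ) : genBinom (z + ℓ) 0 = 1 := by
  have hne : Complex.Gamma (z + ℓ + 1) ≠ 0 := by
    apply Complex.Gamma_ne_zero_of_re_pos
    simp only [Complex.add_re, Complex.one_re, Complex.natCast_re]
    positivity
  simp only [genBinom, Nat.cast_zero, zero_add, sub_zero, Complex.Gamma_one, one_mul]
  exact div_self hne

/-- Bound on `|(1-x)^z - 1|`. -/
lemma cpow_one_sub_bound (z : ℂ) (hz : 1 ≤ z.re) :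
    ∀ x ∈ Set.Icc (0:ℝ) 1,
      ‖(((1 - x : ℝ) : ℂ)) ^ z - 1‖ ≤ (8 * (‖z‖ + 1)) * x := by
  intro x hx
  obtain ⟨hx0, hx1⟩ := hx
  set A := ‖z‖ with hA
  have hA1 : 1 ≤ A := le_trans hz (le_trans (le_abs_self _) (Complex.abs_re_le_norm z))
  by_cases hbig : 1 / (4 * (A + 1)) ≤ x
  · -- x not small: use |(1-x)^z| ≤ 1
    have habs : ‖(((1 - x : ℝ) : ℂ)) ^ z‖ ≤ 1 := by
      rcases eq_or_lt_of_le hx1 with h1 | h1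
      · have : (1 - x : ℝ) = 0 := by linarith
        rw [this]
        rw [show ((0:ℝ):ℂ) = 0 by norm_num, Complex.zero_cpow (by
          intro h; rw [h] at hz; simp at hz; linarith)]
        simp
      · have hpos : (0:ℝ) < 1 - x := by linarith
        rw [Complex.norm_cpow_eq_rpow_re_of_pos hpos]
        exact Real.rpow_le_one (by linarith) (by linarith) (by linarith)
    have h2 : ‖(((1 - x : ℝ) : ℂ)) ^ z - 1‖ ≤ 2 := by
      calc ‖(((1 - x : ℝ) : ℂ)) ^ z - 1‖
          ≤ ‖(((1 - x : ℝ) : ℂ)) ^ z‖ + ‖(1:ℂ)‖ := by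
            exact (norm_sub_le _ _)
        _ ≤ 2 := by rw [norm_one]; linarith
    have : (2:ℝ) ≤ (8 * (A + 1)) * x := by
      have h4 : (0:ℝ) < 4 * (A + 1) := by positivity
      rw [div_le_iff₀ h4] at hbig
      nlinarith
    linarith
  · -- x small
    push_neg at hbig
    have hx8 : x < 1/8 := by
      have : (1:ℝ)/(4*(A+1)) ≤ 1/8 := by
        apply div_le_div_of_nonneg_left <;> nlinarith
      linarith
    have hpos : (0:ℝ) < 1 - x := by linarith
    have hne : (((1 - x : ℝ) : ℂ)) ≠ 0 := by
      simp only [ne_eq, Complex.ofReal_eq_zero]; linarith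
    rw [Complex.cpow_def_of_ne_zero hne]
    rw [← Complex.ofReal_log (le_of_lt hpos)]
    have hlog : |Real.log (1 - x)| ≤ 2 * x := by
      have hl0 : Real.log (1 - x) ≤ 0 := Real.log_nonpos (by linarith) (by linarith)
      rw [abs_of_nonpos hl0]
      have : Real.log (1 - x)⁻¹ ≤ (1 - x)⁻¹ - 1 := Real.log_le_sub_one_of_pos (by positivity)
      rw [Real.log_inv] at this
      have h1 : (1 - x)⁻¹ - 1 = x / (1 - x) := by field_simp; ring
      have h2 : x / (1 - x) ≤ 2 * x := by
        rw [div_le_iff₀ hpos]; nlinarith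
      linarith
    have hw : ‖Complex.log ((1 - x : ℝ) : ℂ) * z‖ ≤ 2 * A * x := by
      rw [← Complex.ofReal_log (le_of_lt hpos), norm_mul, Complex.norm_real, Real.norm_eq_abs]
      have := mul_le_mul_of_nonneg_right hlog (norm_nonneg z)
      calc |Real.log (1 - x)| * A ≤ (2 * x) * A := by
            exact mul_le_mul_of_nonneg_right hlog (norm_nonneg z)
        _ = 2 * A * x := by ring
    have hw1 : ‖Complex.log ((1 - x : ℝ) : ℂ) * z‖ ≤ 1 := by
      have : 2 * A * x ≤ 1 := by
        have h4 : (0:ℝ) < 4 * (A + 1) := by positivity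
        have h5 : x * (4 * (A + 1)) ≤ 1 := by
          rw [← le_div_iff₀ h4]; exact hbig.le
        nlinarith [mul_nonneg hx0 (show (0:ℝ) ≤ A by linarith)]
      linarith
    rw [Complex.ofReal_log (le_of_lt hpos)]
    calc ‖Complex.exp (Complex.log ((1 - x : ℝ) : ℂ) * z) - 1‖
        ≤ 2 * ‖Complex.log ((1 - x : ℝ) : ℂ) * z‖ :=
          Complex.norm_exp_sub_one_le hw1
      _ ≤ 2 * (2 * A * x) := by linarith
      _ ≤ (8 * (A + 1)) * x := by nlinarith

theorem stmt9 (z : ℂ) (hz : 1 ≤ z.re) (ℓ : ℕ) :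
    ∃ C > 0, ∀ x ∈ Set.Icc (0:ℝ) 1,
      ‖filterX z ℓ x - 1‖ ≤ C * x := by
  obtain ⟨B, hB⟩ : ∃ b : ℝ, b = ∑ k ∈ range (ℓ + 1), ‖genBinom (z + ℓ) k‖ :=
    ⟨_, rfl⟩
  have hB0 : 0 ≤ B := by
    rw [hB]; exact Finset.sum_nonneg fun k _ => norm_nonneg _
  obtain ⟨A, hA⟩ : ∃ a : ℝ, a = ‖z‖ := ⟨_, rfl⟩
  have hA0 : 0 ≤ A := by rw [hA]; exact norm_nonneg z
  refine ⟨8 * (A + 1) * B + (ℓ + B) + 1, by nlinarith [Nat.cast_nonneg (α := ℝ) ℓ], ?_⟩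
  intro x hx
  obtain ⟨hx0, hx1⟩ := hx
  set S : ℂ := ∑ k ∈ range (ℓ + 1), genBinom (z + ℓ) k * ((1 : ℂ) - x) ^ (ℓ - k) * (x : ℂ) ^ k
    with hS
  -- basic bounds on factors
  have habs1x : ‖(1 : ℂ) - (x:ℂ)‖ ≤ 1 := by
    rw [show (1:ℂ) - (x:ℂ) = ((1 - x : ℝ) : ℂ) by push_cast; ring, Complex.norm_real, Real.norm_eq_abs,
      _root_.abs_of_nonneg (by linarith)]
    linarith
  have habsx : ‖(x:ℂ)‖ = x := by
    rw [Complex.norm_real, Real.norm_eq_abs, _root_.abs_of_nonneg hx0]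
  -- bound on |S|
  have hSle : ‖S‖ ≤ B := by
    calc ‖S‖ ≤ ∑ k ∈ range (ℓ + 1),
        ‖genBinom (z + ℓ) k * ((1 : ℂ) - x) ^ (ℓ - k) * (x : ℂ) ^ k‖ :=
          norm_sum_le _ _
      _ ≤ B := by
          rw [hB]
          apply Finset.sum_le_sum
          intro k _
          rw [norm_mul, norm_mul, norm_pow, norm_pow, habsx]
          calc ‖genBinom (z + ℓ) k‖ * ‖(1:ℂ) - (x:ℂ)‖ ^ (ℓ - k) * x ^ k
              ≤ ‖genBinom (z + ℓ) k‖ * 1 * 1 := by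
                apply mul_le_mul
                · apply mul_le_mul_of_nonneg_left _ (norm_nonneg _)
                  exact pow_le_one₀ (norm_nonneg _) habs1x
                · exact pow_le_one₀ hx0 hx1
                · positivity
                · positivity
            _ = ‖genBinom (z + ℓ) k‖ := by ring
  -- bound on |S - 1|
  have hS1 : ‖S - 1‖ ≤ (ℓ + B) * x := by
    rw [hS, Finset.sum_range_succ']
    simp only [Nat.cast_zero, pow_zero, mul_one, Nat.sub_zero]
    rw [genBinom_zero_s9 z hz ℓ, one_mul]
    have key : (∑ k ∈ range ℓ, genBinom (z + ℓ) (k + 1) * ((1:ℂ) - x) ^ (ℓ - (k+1)) *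
        (x:ℂ) ^ (k + 1)) + ((1:ℂ) - x) ^ ℓ - 1
        = (∑ k ∈ range ℓ, genBinom (z + ℓ) (k + 1) * ((1:ℂ) - x) ^ (ℓ - (k+1)) *
        (x:ℂ) ^ (k + 1)) + (((1:ℂ) - x) ^ ℓ - 1) := by ring
    rw [key]
    have hterm : ∀ k ∈ range ℓ,
        ‖genBinom (z + ℓ) (k+1) * ((1:ℂ) - x) ^ (ℓ - (k+1)) * (x:ℂ) ^ (k + 1)‖
          ≤ ‖genBinom (z + ℓ) (k+1)‖ * x := by
      intro k _
      rw [norm_mul, norm_mul, norm_pow, norm_pow, habsx]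
      calc ‖genBinom (z + ℓ) (k+1)‖ * ‖(1:ℂ) - (x:ℂ)‖ ^ (ℓ - (k+1))
            * x ^ (k + 1)
          ≤ ‖genBinom (z + ℓ) (k+1)‖ * 1 * x := by
            apply mul_le_mul
            · apply mul_le_mul_of_nonneg_left _ (norm_nonneg _)
              exact pow_le_one₀ (norm_nonneg _) habs1x
            · calc x ^ (k + 1) ≤ x ^ 1 :=
                    pow_le_pow_of_le_one hx0 hx1 (by omega)
                _ = x := pow_one x
            · positivity
            · positivity
        _ = ‖genBinom (z + ℓ) (k+1)‖ * x := by ring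
    have hsum : ‖∑ k ∈ range ℓ, genBinom (z + ℓ) (k + 1) *
        ((1:ℂ) - x) ^ (ℓ - (k+1)) * (x:ℂ) ^ (k + 1)‖ ≤ B * x := by
      calc ‖∑ k ∈ range ℓ, genBinom (z + ℓ) (k + 1) *
            ((1:ℂ) - x) ^ (ℓ - (k+1)) * (x:ℂ) ^ (k + 1)‖
          ≤ ∑ k ∈ range ℓ, ‖genBinom (z + ℓ) (k + 1) *
            ((1:ℂ) - x) ^ (ℓ - (k+1)) * (x:ℂ) ^ (k + 1)‖ := norm_sum_le _ _
        _ ≤ ∑ k ∈ range ℓ, ‖genBinom (z + ℓ) (k+1)‖ * x :=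
            Finset.sum_le_sum hterm
        _ = (∑ k ∈ range ℓ, ‖genBinom (z + ℓ) (k+1)‖) * x := by
            rw [Finset.sum_mul]
        _ ≤ B * x := by
            apply mul_le_mul_of_nonneg_right _ hx0
            rw [hB, Finset.sum_range_succ']
            have : (0:ℝ) ≤ ‖genBinom (z + ℓ) 0‖ := norm_nonneg _
            linarith
    have hpow : ‖((1:ℂ) - x) ^ ℓ - 1‖ ≤ ℓ * x := by
      have hcast : ((1:ℂ) - x) ^ ℓ - 1 = (((1 - x)^ℓ - 1 : ℝ) : ℂ) := by push_cast; ring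
      rw [hcast, Complex.norm_real, Real.norm_eq_abs]
      have hbern : 1 - (ℓ:ℝ) * x ≤ (1 - x) ^ ℓ := by
        have := one_add_mul_le_pow (a := -x) (by linarith) ℓ
        calc 1 - (ℓ:ℝ) * x = 1 + ℓ * (-x) := by ring
          _ ≤ (1 + -x) ^ ℓ := this
          _ = (1 - x) ^ ℓ := by ring_nf
      have hle1 : (1 - x : ℝ) ^ ℓ ≤ 1 := pow_le_one₀ (by linarith) (by linarith)
      rw [abs_of_nonpos (by linarith)]
      linarith
    calc ‖(∑ k ∈ range ℓ, genBinom (z + ℓ) (k + 1) *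
          ((1:ℂ) - x) ^ (ℓ - (k+1)) * (x:ℂ) ^ (k + 1)) + (((1:ℂ) - x) ^ ℓ - 1)‖
        ≤ ‖∑ k ∈ range ℓ, genBinom (z + ℓ) (k + 1) *
          ((1:ℂ) - x) ^ (ℓ - (k+1)) * (x:ℂ) ^ (k + 1)‖
          + ‖((1:ℂ) - x) ^ ℓ - 1‖ := norm_add_le _ _
      _ ≤ B * x + ℓ * x := add_le_add hsum hpow
      _ = (ℓ + B) * x := by ring
  -- combine
  have hdecomp : filterX z ℓ x - 1 = ((((1 - x : ℝ) : ℂ)) ^ z - 1) * S + (S - 1) := by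
    rw [filterX, ← hS]; ring
  rw [hdecomp]
  have hcp := cpow_one_sub_bound z hz x ⟨hx0, hx1⟩
  rw [← hA] at hcp
  calc ‖((((1 - x : ℝ) : ℂ)) ^ z - 1) * S + (S - 1)‖
      ≤ ‖((((1 - x : ℝ) : ℂ)) ^ z - 1) * S‖ + ‖S - 1‖ :=
        norm_add_le _ _
    _ = ‖(((1 - x : ℝ) : ℂ)) ^ z - 1‖ * ‖S‖ + ‖S - 1‖ := by
        rw [norm_mul]
    _ ≤ (8 * (A + 1)) * x * B + (ℓ + B) * x := by
        apply add_le_add _ hS1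
        calc ‖(((1 - x : ℝ) : ℂ)) ^ z - 1‖ * ‖S‖
            ≤ ((8 * (A + 1)) * x) * B := by
              apply mul_le_mul hcp hSle (norm_nonneg _)
              positivity
          _ = (8 * (A + 1)) * x * B := by ring
    _ ≤ (8 * (A + 1) * B + (ℓ + B) + 1) * x := by nlinarith
end

section
/- Let z = x + iy with x ≥ 1 real, and k ≥ 1 an integer such that Σ_{j=0}^{k-1} arctan(y/(x+j)) ∈ (-π/2, π/2). Then Re( ∏_{j=0}^{k-1} (z+j) ) ≥ 0, and consequently Re C(z-1+k, k) ≥ 0. -/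
open Complex Finset Real

/-- Generalized binomial coefficient `C(z-1+k, k) = (∏_{j=0}^{k-1} (z+j)) / k!`. -/
noncomputable def genBinomProd (z : ℂ) (k : ℕ) : ℂ :=
  (∏ j ∈ range k, (z + j)) / (k.factorial : ℂ)

theorem stmt12 (z : ℂ) (hx : 1 ≤ z.re) (k : ℕ) (hk : 1 ≤ k)
    (h : (∑ j ∈ range k, Real.arctan (z.im / (z.re + j))) ∈ Set.Ioo (-(π / 2)) (π / 2)) :
    0 ≤ (∏ j ∈ range k, (z + j)).re ∧ 0 ≤ (genBinomProd z k).re := by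
  have hre : ∀ j : ℕ, 0 < (z + (j : ℂ)).re := by
    intro j
    have : ((j : ℂ)).re = (j : ℝ) := by simp
    simp only [Complex.add_re, this]
    have : (0:ℝ) ≤ j := Nat.cast_nonneg j
    linarith
  have harg : ∀ j : ℕ, Complex.arg (z + (j : ℂ)) = Real.arctan (z.im / (z.re + j)) := by
    intro j
    have h1 : Real.tan (Complex.arg (z + (j : ℂ))) = (z + (j:ℂ)).im / (z + (j:ℂ)).re :=
      Complex.tan_arg _
    have h2 : |Complex.arg (z + (j : ℂ))| < π / 2 :=
      Complex.abs_arg_lt_pi_div_two_iff.mpr (Or.inl (hre j))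
    have h3 : Complex.arg (z + (j : ℂ)) ∈ Set.Ioo (-(π/2)) (π/2) := abs_lt.mp h2
    have := Real.arctan_tan (x := Complex.arg (z + (j : ℂ))) h3.1 h3.2
    rw [h1] at this
    rw [← this]
    congr 1
    simp
  set S : ℝ := ∑ j ∈ range k, Real.arctan (z.im / (z.re + j)) with hS
  have key : (∏ j ∈ range k, (z + (j:ℂ))) =
      ((∏ j ∈ range k, ‖z + (j:ℂ)‖) : ℝ) * Complex.exp (S * Complex.I) := by
    have : ∀ j ∈ range k, (z + (j:ℂ)) =
        ((‖z + (j:ℂ)‖ : ℝ) : ℂ) *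
          Complex.exp ((Real.arctan (z.im / (z.re + j)) : ℝ) * Complex.I) := by
      intro j _
      rw [← harg j]
      exact (Complex.norm_mul_exp_arg_mul_I _).symm
    rw [Finset.prod_congr rfl this, Finset.prod_mul_distrib, ← Complex.exp_sum]
    push_cast
    congr 1
    rw [← Finset.sum_mul]
    norm_cast
  have hcos : 0 ≤ Real.cos S :=
    Real.cos_nonneg_of_mem_Icc ⟨le_of_lt h.1, le_of_lt h.2⟩
  have habs : 0 ≤ ∏ j ∈ range k, ‖z + (j:ℂ)‖ :=
    Finset.prod_nonneg fun j _ => norm_nonneg _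
  have hrprod : 0 ≤ (∏ j ∈ range k, (z + (j:ℂ))).re := by
    rw [key, Complex.re_ofReal_mul, Complex.exp_ofReal_mul_I_re]
    exact mul_nonneg habs hcos
  refine ⟨hrprod, ?_⟩
  rw [genBinomProd]
  rw [Complex.div_re]
  simp only [Complex.natCast_re, Complex.natCast_im]
  have hfac : (0:ℝ) < (k.factorial : ℝ) := by positivity
  have : Complex.normSq ((k.factorial : ℂ)) = (k.factorial : ℝ)^2 := by
    simp [Complex.normSq_natCast]; ring
  rw [this]
  have h2 : (∏ j ∈ range k, (z + (j:ℂ))).im * 0 / ((k.factorial:ℝ)^2) = 0 := by ring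
  rw [h2]
  positivity
end

section
/- Let z = x + iy with x ≥ 1, and ℓ ∈ ℕ₀ such that Σ_{j=0}^{ℓ} arctan(y/(x+j)) ∈ (-π/2, π/2). Then the polynomial P(t) = Σ_{k=0}^{ℓ} C(z-1+k, k) t^k satisfies |P(t)| ≥ 1 for all t ∈ [0,1]. -/
open Complex Finset Real

lemma arg_eq_arctan' {w : ℂ} (hw : 0 < w.re) :
    Complex.arg w = Real.arctan (w.im / w.re) := by
  have h1 : |Complex.arg w| < π / 2 := Complex.abs_arg_lt_pi_div_two_iff.2 (Or.inl hw)
  rw [abs_lt] at h1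
  rw [← Complex.tan_arg, Real.arctan_tan h1.1 h1.2]

theorem stmt13 (z : ℂ) (hx : 1 ≤ z.re) (ℓ : ℕ)
    (h : (∑ j ∈ range (ℓ + 1), Real.arctan (z.im / (z.re + j))) ∈
      Set.Ioo (-(π / 2)) (π / 2)) :
    ∀ t ∈ Set.Icc (0:ℝ) 1,
      1 ≤ ‖∑ k ∈ range (ℓ + 1), genBinomProd z k * (t : ℂ) ^ k‖ := by
  intro t ht
  set S : ℕ → ℝ := fun k => ∑ j ∈ range k, Real.arctan (z.im / (z.re + j)) with hS
  have hre : ∀ j : ℕ, 0 < (z + (j : ℂ)).re := by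
    intro j
    have : ((j : ℂ)).re = (j : ℝ) := by simp
    simp only [Complex.add_re, this]
    have : (0:ℝ) ≤ j := Nat.cast_nonneg j
    linarith
  -- cos (S k) ≥ 0 for k ≤ ℓ + 1
  have hcos : ∀ k ≤ ℓ + 1, 0 ≤ Real.cos (S k) := by
    intro k hk
    apply Real.cos_nonneg_of_mem_Icc
    rcases le_or_gt 0 z.im with hy | hy
    · have hterm : ∀ j : ℕ, 0 ≤ Real.arctan (z.im / (z.re + j)) := by
        intro j
        have hd : (0:ℝ) ≤ z.im / (z.re + j) := by
          apply div_nonneg hy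
          have : (0:ℝ) ≤ j := Nat.cast_nonneg j
          linarith
        have := Real.arctan_strictMono.monotone hd
        simpa [Real.arctan_zero] using this
      have h0 : 0 ≤ S k := Finset.sum_nonneg fun j _ => hterm j
      have hle : S k ≤ S (ℓ + 1) := by
        apply Finset.sum_le_sum_of_subset_of_nonneg
        · exact Finset.range_subset_range.2 hk
        · intro j _ _; exact hterm j
      constructor
      · linarith [Real.pi_pos]
      · exact hle.trans h.2.le
    · have hterm : ∀ j : ℕ, Real.arctan (z.im / (z.re + j)) ≤ 0 := by
        intro j
        have : z.im / (z.re + j) ≤ 0 := by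
          apply div_nonpos_of_nonpos_of_nonneg hy.le
          have : (0:ℝ) ≤ j := Nat.cast_nonneg j
          linarith
        have := Real.arctan_strictMono.monotone this
        simpa [Real.arctan_zero] using this
      have h0 : S k ≤ 0 := Finset.sum_nonpos fun j _ => hterm j
      have hle : S (ℓ + 1) ≤ S k := by
        have hsplit : S k + (∑ j ∈ Finset.Ico k (ℓ + 1), Real.arctan (z.im / (z.re + j)))
            = S (ℓ + 1) := by
          simp only [hS, Finset.range_eq_Ico]
          exact Finset.sum_Ico_consecutive _ (Nat.zero_le k) hk
        have h2 : (∑ j ∈ Finset.Ico k (ℓ + 1), Real.arctan (z.im / (z.re + j))) ≤ 0 :=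
          Finset.sum_nonpos fun j _ => hterm j
        linarith
      constructor
      · exact h.1.le.trans hle
      · linarith [Real.pi_pos]
  -- product formula
  have prod_eq : ∀ k, (∏ j ∈ range k, (z + (j:ℂ))) =
      ((∏ j ∈ range k, ‖z + j‖) : ℝ) * Complex.exp ((S k : ℝ) * I) := by
    intro k
    have hfac : ∀ j ∈ range k, (z + (j:ℂ)) =
        ((‖z + j‖ : ℝ) : ℂ) *
          Complex.exp ((Real.arctan (z.im / (z.re + j)) : ℝ) * I) := by
      intro j _
      have harg : Complex.arg (z + j) = Real.arctan (z.im / (z.re + j)) := by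
        rw [arg_eq_arctan' (hre j)]
        norm_num
      rw [← harg]
      exact (Complex.norm_mul_exp_arg_mul_I (z + j)).symm
    rw [Finset.prod_congr rfl hfac, Finset.prod_mul_distrib, ← Complex.exp_sum]
    push_cast
    rw [← Finset.sum_mul]
    norm_num [hS]
  -- real part of each term is nonneg, and term 0 has re = 1
  have hre_term : ∀ k ∈ range (ℓ + 1), 0 ≤ (genBinomProd z k * (t : ℂ) ^ k).re := by
    intro k hk
    have hk' : k ≤ ℓ + 1 := le_of_lt (Finset.mem_range.1 hk) |>.trans (le_refl _) |>.trans (by omega)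
    unfold genBinomProd
    rw [prod_eq k]
    have htk : ((t : ℂ)) ^ k = ((t ^ k : ℝ) : ℂ) := by push_cast; ring
    rw [htk]
    have : (((∏ j ∈ range k, ‖z + j‖) : ℝ) : ℂ) * Complex.exp ((S k : ℝ) * I) /
        (k.factorial : ℂ) * ((t ^ k : ℝ) : ℂ) =
        (((∏ j ∈ range k, ‖z + j‖) * t ^ k / k.factorial : ℝ) : ℂ) *
          Complex.exp ((S k : ℝ) * I) := by
      push_cast; ring
    rw [this, Complex.re_ofReal_mul, Complex.exp_ofReal_mul_I_re]
    apply mul_nonneg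
    · apply div_nonneg
      · apply mul_nonneg
        · exact Finset.prod_nonneg fun j _ => norm_nonneg _
        · exact pow_nonneg ht.1 k
      · positivity
    · exact hcos k (by omega)
  have hterm0 : (genBinomProd z 0 * (t : ℂ) ^ 0).re = 1 := by
    simp [genBinomProd]
  calc (1:ℝ) = (genBinomProd z 0 * (t : ℂ) ^ 0).re := hterm0.symm
    _ ≤ (∑ k ∈ range (ℓ + 1), genBinomProd z k * (t : ℂ) ^ k).re := by
        rw [Complex.re_sum]
        exact Finset.single_le_sum hre_term (Finset.mem_range.2 (Nat.succ_pos ℓ))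
    _ ≤ ‖_‖ := Complex.re_le_norm _
end

section
/- For real α ≥ 1 and integer 0 ≤ ℓ ≤ ⌊α - 1/2⌋, let p(t) = Σ_{k=0}^{ℓ} C(α-1+k, k) t^k. Then p(t)·p(4t(1-t)) ≤ p(3/4)² for all t ∈ [3/4, 1]. -/
open Finset

/-- Real generalized binomial coefficient `C(α-1+k, k) = (∏_{j=0}^{k-1} (α+j)) / k!`. -/
noncomputable def genBinomR (α : ℝ) (k : ℕ) : ℝ :=
  (∏ j ∈ range k, (α + j)) / (k.factorial : ℝ)

/-- The polynomial `p(t) = ∑_{k=0}^ℓ C(α-1+k,k) t^k`. -/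
noncomputable def pPoly (α : ℝ) (ℓ : ℕ) (t : ℝ) : ℝ :=
  ∑ k ∈ range (ℓ + 1), genBinomR α k * t ^ k

noncomputable def pDer (α : ℝ) (ℓ : ℕ) (t : ℝ) : ℝ :=
  ∑ k ∈ range ℓ, (α + k) * genBinomR α k * t ^ k

lemma genBinomR_pos {α : ℝ} (hα : 1 ≤ α) (k : ℕ) : 0 < genBinomR α k := by
  unfold genBinomR
  apply div_pos
  · exact Finset.prod_pos fun j _ => by positivity
  · exact_mod_cast Nat.factorial_pos k

lemma genBinomR_succ (α : ℝ) (k : ℕ) :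
    ((k : ℝ) + 1) * genBinomR α (k + 1) = (α + k) * genBinomR α k := by
  unfold genBinomR
  rw [Finset.prod_range_succ, Nat.factorial_succ]
  have h1 : (k.factorial : ℝ) ≠ 0 := by exact_mod_cast k.factorial_pos.ne'
  have h2 : ((k : ℝ) + 1) ≠ 0 := by positivity
  push_cast
  field_simp

lemma pPoly_hasDerivAt (α : ℝ) (ℓ : ℕ) (x : ℝ) :
    HasDerivAt (pPoly α ℓ) (pDer α ℓ x) x := by
  have h : HasDerivAt (fun t : ℝ => ∑ k ∈ range (ℓ + 1), genBinomR α k * t ^ k)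
      (∑ k ∈ range (ℓ + 1), genBinomR α k * (k * x ^ (k - 1))) x :=
    HasDerivAt.fun_sum fun k _ => (hasDerivAt_pow k x).const_mul _
  have heq : (∑ k ∈ range (ℓ + 1), genBinomR α k * (k * x ^ (k - 1))) = pDer α ℓ x := by
    rw [Finset.sum_range_succ']
    have h0 : genBinomR α 0 * ((0 : ℕ) * x ^ (0 - 1)) = 0 := by norm_num
    rw [h0, add_zero]
    unfold pDer
    refine Finset.sum_congr rfl fun k _ => ?_
    have h := genBinomR_succ α k
    have hk : (k + 1) - 1 = k := rfl
    rw [hk]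
    push_cast
    linear_combination x ^ k * h
  rw [heq] at h
  exact h

lemma pPoly_split (α : ℝ) (ℓ : ℕ) (x : ℝ) :
    pPoly α ℓ x = (∑ k ∈ range ℓ, genBinomR α k * x ^ k) + genBinomR α ℓ * x ^ ℓ :=
  Finset.sum_range_succ _ _

lemma trunc_nonneg {α : ℝ} (hα : 1 ≤ α) (ℓ : ℕ) {x : ℝ} (hx : 0 ≤ x) :
    0 ≤ ∑ k ∈ range ℓ, genBinomR α k * x ^ k :=
  Finset.sum_nonneg fun k _ => mul_nonneg (genBinomR_pos hα k).le (pow_nonneg hx k)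

lemma pPoly_pos {α : ℝ} (hα : 1 ≤ α) (ℓ : ℕ) {x : ℝ} (hx : 0 ≤ x) : 0 < pPoly α ℓ x := by
  unfold pPoly
  rw [Finset.sum_range_succ']
  have h1 : 0 ≤ ∑ k ∈ range ℓ, genBinomR α (k + 1) * x ^ (k + 1) :=
    Finset.sum_nonneg fun k _ => mul_nonneg (genBinomR_pos hα _).le (pow_nonneg hx _)
  have h2 : 0 < genBinomR α 0 * x ^ 0 := by
    simpa using genBinomR_pos hα 0
  linarith

lemma pDer_nonneg {α : ℝ} (hα : 1 ≤ α) (ℓ : ℕ) {x : ℝ} (hx : 0 ≤ x) :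
    0 ≤ pDer α ℓ x :=
  Finset.sum_nonneg fun k _ => mul_nonneg
    (mul_nonneg (by positivity) (genBinomR_pos hα k).le) (pow_nonneg hx k)

lemma pDer_le {α : ℝ} (hα : 1 ≤ α) (ℓ : ℕ) {x : ℝ} (hx : 0 ≤ x) :
    pDer α ℓ x ≤ (α + ℓ - 1) * ∑ k ∈ range ℓ, genBinomR α k * x ^ k := by
  rw [Finset.mul_sum]
  refine Finset.sum_le_sum fun k hk => ?_
  have hk' : (k : ℝ) ≤ (ℓ : ℝ) - 1 := by
    have := Finset.mem_range.mp hk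
    have : (k : ℝ) + 1 ≤ (ℓ : ℝ) := by exact_mod_cast this
    linarith
  have h : (0:ℝ) ≤ genBinomR α k * x ^ k :=
    mul_nonneg (genBinomR_pos hα k).le (pow_nonneg hx k)
  nlinarith [h]

lemma pDer_ge {α : ℝ} (hα : 1 ≤ α) (ℓ : ℕ) {x : ℝ} (hx : 0 ≤ x) :
    α * (∑ k ∈ range ℓ, genBinomR α k * x ^ k) ≤ pDer α ℓ x := by
  rw [Finset.mul_sum]
  refine Finset.sum_le_sum fun k hk => ?_
  have h : (0:ℝ) ≤ genBinomR α k * x ^ k :=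
    mul_nonneg (genBinomR_pos hα k).le (pow_nonneg hx k)
  have hk0 : (0:ℝ) ≤ (k:ℝ) := Nat.cast_nonneg k
  nlinarith [h]

lemma mono_ratio {α : ℝ} (hα : 1 ≤ α) (ℓ : ℕ) {s t : ℝ} (hs0 : 0 ≤ s) (hst : s ≤ t) :
    s ^ ℓ * pPoly α ℓ t ≤ t ^ ℓ * pPoly α ℓ s := by
  unfold pPoly
  rw [Finset.mul_sum, Finset.mul_sum]
  refine Finset.sum_le_sum fun k hk => ?_
  have hkℓ : k ≤ ℓ := Nat.lt_succ_iff.mp (Finset.mem_range.mp hk)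
  obtain ⟨m, rfl⟩ : ∃ m, ℓ = k + m := ⟨ℓ - k, (Nat.add_sub_cancel' hkℓ).symm⟩
  have ht0 : 0 ≤ t := le_trans hs0 hst
  have hc : (0:ℝ) ≤ genBinomR α k := (genBinomR_pos hα k).le
  have hpow : s ^ m ≤ t ^ m := pow_le_pow_left₀ hs0 hst m
  calc s ^ (k + m) * (genBinomR α k * t ^ k)
      = (genBinomR α k * t ^ k * s ^ k) * s ^ m := by ring
    _ ≤ (genBinomR α k * t ^ k * s ^ k) * t ^ m := by
        exact mul_le_mul_of_nonneg_left hpow (by positivity)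
    _ = t ^ (k + m) * (genBinomR α k * s ^ k) := by ring

theorem stmt15 (α : ℝ) (hα : 1 ≤ α) (ℓ : ℕ) (hℓ : (ℓ : ℝ) ≤ α - 1/2) :
    ∀ t ∈ Set.Icc (3/4 : ℝ) 1,
      pPoly α ℓ t * pPoly α ℓ (4 * t * (1 - t)) ≤ pPoly α ℓ (3/4) ^ 2 := by
  set g : ℝ → ℝ := fun t => pPoly α ℓ t * pPoly α ℓ (4 * t * (1 - t)) with hgdef
  have hg : ∀ x : ℝ, HasDerivAt g
      (pDer α ℓ x * pPoly α ℓ (4 * x * (1 - x)) +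
        pPoly α ℓ x * (pDer α ℓ (4 * x * (1 - x)) * (4 - 8 * x))) x := by
    intro x
    have hu : HasDerivAt (fun y : ℝ => 4 * y * (1 - y)) (4 - 8 * x) x := by
      have h1 : HasDerivAt (fun y : ℝ => 4 * y) 4 x := by
        simpa using (hasDerivAt_id x).const_mul (4 : ℝ)
      have h2 : HasDerivAt (fun y : ℝ => 1 - y) (-1) x := by
        simpa using (hasDerivAt_id x).const_sub (1 : ℝ)
      have := h1.fun_mul h2
      exact this.congr_deriv (by ring)
    exact (pPoly_hasDerivAt α ℓ x).fun_mul (HasDerivAt.comp (h₂ := pPoly α ℓ) x (pPoly_hasDerivAt α ℓ (4 * x * (1 - x))) hu)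
  have hcont : ContinuousOn g (Set.Icc (3/4 : ℝ) 1) :=
    (Differentiable.continuous fun x => (hg x).differentiableAt).continuousOn
  have hdiff : DifferentiableOn ℝ g (interior (Set.Icc (3/4 : ℝ) 1)) :=
    fun x _ => ((hg x).differentiableAt).differentiableWithinAt
  have hder : ∀ x ∈ interior (Set.Icc (3/4 : ℝ) 1), deriv g x ≤ 0 := by
    intro x hx
    rw [interior_Icc] at hx
    obtain ⟨hx1, hx2⟩ := hx
    rw [(hg x).deriv]
    set s : ℝ := 4 * x * (1 - x) with hsdef
    have hx0 : (0:ℝ) < x := by linarith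
    have hs0 : 0 ≤ s := by nlinarith
    have hst : s ≤ x := by nlinarith
    have hPx : 0 < pPoly α ℓ x := pPoly_pos hα ℓ hx0.le
    have hPs : 0 < pPoly α ℓ s := pPoly_pos hα ℓ hs0
    have hDs : 0 ≤ pDer α ℓ s := pDer_nonneg hα ℓ hs0
    have hSx : 0 ≤ ∑ k ∈ range ℓ, genBinomR α k * x ^ k := trunc_nonneg hα ℓ hx0.le
    have hSs : 0 ≤ ∑ k ∈ range ℓ, genBinomR α k * s ^ k := trunc_nonneg hα ℓ hs0
    have hA : (0:ℝ) ≤ α + ℓ - 1 := by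
      have : (0:ℝ) ≤ (ℓ:ℝ) := Nat.cast_nonneg ℓ
      linarith
    have hc : (0:ℝ) ≤ genBinomR α ℓ := (genBinomR_pos hα ℓ).le
    have hmono := mono_ratio hα ℓ hs0 hst
    have hsplitx := pPoly_split α ℓ x
    have hsplits := pPoly_split α ℓ s
    -- key chain
    have key : pDer α ℓ x * pPoly α ℓ s ≤ (8 * x - 4) * (pPoly α ℓ x * pDer α ℓ s) := by
      have c1 : pDer α ℓ x * pPoly α ℓ s ≤
          ((α + ℓ - 1) * ∑ k ∈ range ℓ, genBinomR α k * x ^ k) * pPoly α ℓ s :=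
        mul_le_mul_of_nonneg_right (pDer_le hα ℓ hx0.le) hPs.le
      have c2 : ((α + ℓ - 1) * ∑ k ∈ range ℓ, genBinomR α k * x ^ k) * pPoly α ℓ s ≤
          (α + ℓ - 1) * (pPoly α ℓ x * ∑ k ∈ range ℓ, genBinomR α k * s ^ k) := by
        have hSx' : (∑ k ∈ range ℓ, genBinomR α k * x ^ k)
            = pPoly α ℓ x - genBinomR α ℓ * x ^ ℓ := by linarith [hsplitx]
        have hSs' : (∑ k ∈ range ℓ, genBinomR α k * s ^ k)
            = pPoly α ℓ s - genBinomR α ℓ * s ^ ℓ := by linarith [hsplits]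
        have h6 := mul_le_mul_of_nonneg_left hmono (mul_nonneg hA hc)
        rw [hSx', hSs']
        nlinarith [h6]
      have c3 : (α + ℓ - 1) * (pPoly α ℓ x * ∑ k ∈ range ℓ, genBinomR α k * s ^ k) ≤
          2 * α * (pPoly α ℓ x * ∑ k ∈ range ℓ, genBinomR α k * s ^ k) := by
        have hprod : 0 ≤ pPoly α ℓ x * ∑ k ∈ range ℓ, genBinomR α k * s ^ k :=
          mul_nonneg hPx.le hSs
        nlinarith [hprod]
      have c4 : 2 * α * (pPoly α ℓ x * ∑ k ∈ range ℓ, genBinomR α k * s ^ k) ≤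
          2 * (pPoly α ℓ x * pDer α ℓ s) := by
        have := mul_le_mul_of_nonneg_left (pDer_ge hα ℓ hs0) hPx.le
        nlinarith [this]
      have c5 : 2 * (pPoly α ℓ x * pDer α ℓ s) ≤ (8 * x - 4) * (pPoly α ℓ x * pDer α ℓ s) := by
        have hprod : 0 ≤ pPoly α ℓ x * pDer α ℓ s := mul_nonneg hPx.le hDs
        nlinarith [hprod]
      linarith
    nlinarith [key]
  have hanti : AntitoneOn g (Set.Icc (3/4 : ℝ) 1) :=
    antitoneOn_of_deriv_nonpos (convex_Icc _ _) hcont hdiff hder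
  intro t ht
  have h34 : (3/4 : ℝ) ∈ Set.Icc (3/4 : ℝ) 1 := by constructor <;> norm_num
  have := hanti h34 ht ht.1
  have hval : g (3/4) = pPoly α ℓ (3/4) ^ 2 := by
    have : (4 : ℝ) * (3/4) * (1 - 3/4) = 3/4 := by norm_num
    simp only [hgdef, this, sq]
  rw [hval] at this
  exact this
end

section
/- Let H₀ be a 1-periodic measurable function on ℝ satisfying |H₀(γ)|² + |H₀(γ+1/2)|² ≤ 1 for a.e. γ, and define φ̂_m(γ) = χ_{[-2^{m-1}, 2^{m-1}]}(γ) ∏_{j=1}^{m} H₀(2^{-j}γ). Then ‖φ̂_{m+1}‖_{L²} ≤ ‖φ̂_m‖_{L²} for all m, and hence ‖φ̂_m‖_{L²} ≤ 1 for all m ∈ ℕ (with φ̂₀ = χ_{[-1/2,1/2]}). -/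
open MeasureTheory Finset

/-- The cascade-algorithm approximants in the Fourier domain:
`φ̂_m(γ) = χ_{[-2^{m-1}, 2^{m-1}]}(γ) ∏_{j=1}^m H₀(2^{-j} γ)`
(for `m = 0` the empty product gives `φ̂₀ = χ_{[-1/2,1/2]}`). -/
noncomputable def cascadeFT (H₀ : ℝ → ℂ) (m : ℕ) : ℝ → ℂ :=
  Set.indicator (Set.Icc (-(2:ℝ) ^ ((m : ℤ) - 1)) ((2:ℝ) ^ ((m : ℤ) - 1)))
    (fun γ => ∏ j ∈ Finset.Icc 1 m, H₀ ((2:ℝ) ^ (-(j : ℤ)) * γ))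

noncomputable def P17 (H₀ : ℝ → ℂ) (m : ℕ) (γ : ℝ) : ENNReal :=
  ∏ j ∈ Finset.Icc 1 m, (‖H₀ ((2:ℝ) ^ (-(j : ℤ)) * γ)‖₊ : ENNReal) ^ 2

lemma shift17 (f : ℝ → ENNReal) (c d t : ℝ) :
    ∫⁻ x in Set.Ioc c d, f (x + t) = ∫⁻ x in Set.Ioc (c + t) (d + t), f x := by
  rw [← lintegral_indicator measurableSet_Ioc, ← lintegral_indicator measurableSet_Ioc,
    ← lintegral_add_right_eq_self (fun x => (Set.Ioc (c + t) (d + t)).indicator f x) t]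
  congr 1
  ext x
  by_cases hx : x ∈ Set.Ioc c d
  · rw [Set.indicator_of_mem hx, Set.indicator_of_mem]
    simp only [Set.mem_Ioc] at hx ⊢
    exact ⟨by linarith [hx.1], by linarith [hx.2]⟩
  · rw [Set.indicator_of_notMem hx, Set.indicator_of_notMem]
    simp only [Set.mem_Ioc] at hx ⊢
    intro h; exact hx ⟨by linarith [h.1], by linarith [h.2]⟩

lemma perNat17 (H₀ : ℝ → ℂ) (hper : ∀ γ : ℝ, H₀ (γ + 1) = H₀ γ) (n : ℕ) (γ : ℝ) :
    H₀ (γ + n) = H₀ γ := by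
  induction n with
  | zero => simp
  | succ k ih =>
      have : γ + (k + 1 : ℕ) = (γ + k) + 1 := by push_cast; ring
      rw [this, hper, ih]

lemma Pper17 (H₀ : ℝ → ℂ) (hper : ∀ γ : ℝ, H₀ (γ + 1) = H₀ γ) (m : ℕ) (γ : ℝ) :
    P17 H₀ m (γ + (2:ℝ) ^ (m : ℤ)) = P17 H₀ m γ := by
  unfold P17
  refine Finset.prod_congr rfl fun j hj => ?_
  rw [Finset.mem_Icc] at hj
  have harg : (2:ℝ) ^ (-(j:ℤ)) * (γ + 2 ^ (m:ℤ)) =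
      (2:ℝ) ^ (-(j:ℤ)) * γ + ((2 ^ (m - j) : ℕ) : ℝ) := by
    rw [mul_add]
    congr 1
    have h2 : (-(j:ℤ)) + (m:ℤ) = ((m - j : ℕ) : ℤ) := by omega
    calc (2:ℝ) ^ (-(j:ℤ)) * 2 ^ (m:ℤ) = 2 ^ ((-(j:ℤ)) + m) := (zpow_add₀ two_ne_zero _ _).symm
      _ = 2 ^ (((m - j : ℕ)) : ℤ) := by rw [h2]
      _ = ((2 ^ (m - j) : ℕ) : ℝ) := by push_cast; rw [zpow_natCast]
  rw [harg, perNat17 H₀ hper]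

lemma Qper17 (m : ℕ) (x : ℝ) :
    (2:ℝ) ^ (-((m+1 : ℕ) : ℤ)) * (x + (2:ℝ) ^ (m : ℤ)) =
      (2:ℝ) ^ (-((m+1 : ℕ) : ℤ)) * x + 1/2 := by
  rw [mul_add]
  congr 1
  have h2 : (-((m+1:ℕ):ℤ)) + (m:ℤ) = -1 := by omega
  calc (2:ℝ) ^ (-((m+1:ℕ):ℤ)) * 2 ^ (m:ℤ) = 2 ^ ((-((m+1:ℕ):ℤ)) + m) :=
        (zpow_add₀ two_ne_zero _ _).symm
    _ = 2 ^ (-1 : ℤ) := by rw [h2]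
    _ = 1/2 := by norm_num

lemma Pmeas17 (H₀ : ℝ → ℂ) (hmeas : Measurable H₀) (m : ℕ) : Measurable (P17 H₀ m) :=
  Finset.measurable_prod _ fun j _ =>
    ((hmeas.comp (measurable_const_mul _)).nnnorm.coe_nnreal_ennreal).pow_const 2

lemma key17 (H₀ : ℝ → ℂ) (hmeas : Measurable H₀)
    (hper : ∀ γ : ℝ, H₀ (γ + 1) = H₀ γ)
    (hQbound : ∀ᵐ x : ℝ, ∀ m : ℕ,
      (‖H₀ ((2:ℝ) ^ (-((m+1:ℕ):ℤ)) * x)‖₊ : ENNReal) ^ 2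
        + (‖H₀ ((2:ℝ) ^ (-((m+1:ℕ):ℤ)) * x + 1/2)‖₊ : ENNReal) ^ 2 ≤ 1)
    (m : ℕ) :
    (∫⁻ γ in Set.Icc (-(2:ℝ) ^ (((m+1:ℕ) : ℤ) - 1)) ((2:ℝ) ^ (((m+1:ℕ) : ℤ) - 1)),
        P17 H₀ (m+1) γ)
      ≤ ∫⁻ γ in Set.Icc (-(2:ℝ) ^ ((m : ℤ) - 1)) ((2:ℝ) ^ ((m : ℤ) - 1)), P17 H₀ m γ := by
  set a : ℝ := (2:ℝ) ^ ((m : ℤ) - 1) with ha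
  set T : ℝ := (2:ℝ) ^ (m : ℤ) with hT
  have haT : T = a + a := by
    have h : (2:ℝ) ^ ((m:ℤ) - 1) * 2 = 2 ^ (m:ℤ) := by
      rw [← zpow_add_one₀ (two_ne_zero : (2:ℝ) ≠ 0)]; norm_num
    rw [ha, hT]; linarith
  have hapos : 0 < a := by positivity
  have hTpos : 0 < T := by positivity
  have hcast : (((m+1:ℕ)) : ℤ) - 1 = (m : ℤ) := by push_cast; ring
  set Q : ℝ → ENNReal := fun γ => (‖H₀ ((2:ℝ) ^ (-((m+1:ℕ):ℤ)) * γ)‖₊ : ENNReal) ^ 2 with hQ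
  set Q' : ℝ → ENNReal :=
    fun γ => (‖H₀ ((2:ℝ) ^ (-((m+1:ℕ):ℤ)) * γ + 1/2)‖₊ : ENNReal) ^ 2 with hQ'
  have hPQ : ∀ γ, P17 H₀ (m+1) γ = P17 H₀ m γ * Q γ := by
    intro γ
    unfold P17
    rw [Finset.prod_Icc_succ_top (Nat.succ_le_succ (Nat.zero_le m))]
  have hPm : Measurable (P17 H₀ m) := Pmeas17 H₀ hmeas m
  have hQm : Measurable Q := (hmeas.comp (measurable_const_mul _)).nnnorm.coe_nnreal_ennreal.pow_const 2
  have hQ'm : Measurable Q' :=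
    ((hmeas.comp ((measurable_const_mul _).add_const _)).nnnorm.coe_nnreal_ennreal).pow_const 2
  -- rewrite LHS
  have step1 :
      (∫⁻ γ in Set.Icc (-(2:ℝ) ^ (((m+1:ℕ) : ℤ) - 1)) ((2:ℝ) ^ (((m+1:ℕ) : ℤ) - 1)),
        P17 H₀ (m+1) γ)
      = ∫⁻ γ in Set.Ioc (-T) T, P17 H₀ m γ * Q γ := by
    rw [hcast, Measure.restrict_congr_set Ioc_ae_eq_Icc.symm]
    exact lintegral_congr fun γ => hPQ γ
  have hsub : -T ≤ 0 := le_of_lt (neg_neg_iff_pos.mpr hTpos)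
  have hsplit : ∫⁻ γ in Set.Ioc (-T) T, P17 H₀ m γ * Q γ
      = (∫⁻ γ in Set.Ioc (-T) 0, P17 H₀ m γ * Q γ)
        + ∫⁻ γ in Set.Ioc 0 T, P17 H₀ m γ * Q γ := by
    rw [← lintegral_union measurableSet_Ioc (Set.Ioc_disjoint_Ioc_of_le le_rfl),
      Set.Ioc_union_Ioc_eq_Ioc hsub (le_of_lt hTpos)]
  have hshift : ∫⁻ γ in Set.Ioc 0 T, P17 H₀ m γ * Q γ
      = ∫⁻ x in Set.Ioc (-T) 0, P17 H₀ m x * Q' x := by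
    have := shift17 (fun γ => P17 H₀ m γ * Q γ) (-T) 0 T
    rw [neg_add_cancel, zero_add] at this
    rw [← this]
    refine lintegral_congr fun x => ?_
    rw [Pper17 H₀ hper m x]
    congr 1
    rw [hQ, hQ']
    simp only []
    rw [Qper17 m x]
  have hcomb : (∫⁻ γ in Set.Ioc (-T) 0, P17 H₀ m γ * Q γ)
        + ∫⁻ x in Set.Ioc (-T) 0, P17 H₀ m x * Q' x
      = ∫⁻ x in Set.Ioc (-T) 0, P17 H₀ m x * (Q x + Q' x) := by
    rw [← lintegral_add_left (f := fun x => P17 H₀ m x * Q x) (hPm.mul hQm)]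
    exact lintegral_congr fun x => by ring
  have hmono : (∫⁻ x in Set.Ioc (-T) 0, P17 H₀ m x * (Q x + Q' x))
      ≤ ∫⁻ x in Set.Ioc (-T) 0, P17 H₀ m x := by
    refine lintegral_mono_ae ?_
    have : ∀ᵐ x : ℝ, Q x + Q' x ≤ 1 := by
      filter_upwards [hQbound] with x h using h m
    filter_upwards [ae_restrict_of_ae this] with x h
    calc P17 H₀ m x * (Q x + Q' x) ≤ P17 H₀ m x * 1 := mul_le_mul_right h _
      _ = P17 H₀ m x := mul_one _
  have hsplit2 : ∫⁻ x in Set.Ioc (-T) 0, P17 H₀ m x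
      = (∫⁻ x in Set.Ioc (-T) (-a), P17 H₀ m x) + ∫⁻ x in Set.Ioc (-a) 0, P17 H₀ m x := by
    rw [← lintegral_union measurableSet_Ioc (Set.Ioc_disjoint_Ioc_of_le le_rfl),
      Set.Ioc_union_Ioc_eq_Ioc (by linarith) (by linarith)]
  have hshift2 : ∫⁻ x in Set.Ioc (-T) (-a), P17 H₀ m x
      = ∫⁻ x in Set.Ioc 0 a, P17 H₀ m x := by
    have h1 : ∫⁻ x in Set.Ioc (-T) (-a), P17 H₀ m (x + T)
        = ∫⁻ x in Set.Ioc 0 a, P17 H₀ m x := by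
      have := shift17 (P17 H₀ m) (-T) (-a) T
      rw [neg_add_cancel] at this
      have h2 : -a + T = a := by rw [haT]; ring
      rw [h2] at this
      exact this
    rw [← h1]
    exact lintegral_congr fun x => (Pper17 H₀ hper m x).symm
  have hfinal : (∫⁻ x in Set.Ioc (-T) (-a), P17 H₀ m x) + ∫⁻ x in Set.Ioc (-a) 0, P17 H₀ m x
      = ∫⁻ γ in Set.Icc (-a) a, P17 H₀ m γ := by
    rw [hshift2, add_comm,
      ← lintegral_union measurableSet_Ioc (Set.Ioc_disjoint_Ioc_of_le le_rfl),
      Set.Ioc_union_Ioc_eq_Ioc (by linarith) (le_of_lt hapos),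
      Measure.restrict_congr_set Ioc_ae_eq_Icc]
  calc (∫⁻ γ in Set.Icc (-(2:ℝ) ^ (((m+1:ℕ) : ℤ) - 1)) ((2:ℝ) ^ (((m+1:ℕ) : ℤ) - 1)),
        P17 H₀ (m+1) γ)
      = (∫⁻ γ in Set.Ioc (-T) 0, P17 H₀ m γ * Q γ)
        + ∫⁻ γ in Set.Ioc 0 T, P17 H₀ m γ * Q γ := by rw [step1, hsplit]
    _ = ∫⁻ x in Set.Ioc (-T) 0, P17 H₀ m x * (Q x + Q' x) := by rw [hshift, hcomb]
    _ ≤ ∫⁻ x in Set.Ioc (-T) 0, P17 H₀ m x := hmono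
    _ = ∫⁻ γ in Set.Icc (-a) a, P17 H₀ m γ := by rw [hsplit2, hfinal]

lemma eLp17 (H₀ : ℝ → ℂ) (m : ℕ) :
    eLpNorm (cascadeFT H₀ m) 2 volume =
      (∫⁻ γ in Set.Icc (-(2:ℝ) ^ ((m : ℤ) - 1)) ((2:ℝ) ^ ((m : ℤ) - 1)), P17 H₀ m γ)
        ^ (1/2 : ℝ) := by
  rw [eLpNorm_eq_lintegral_rpow_enorm_toReal two_ne_zero ENNReal.ofNat_ne_top]
  congr 1
  · rw [← lintegral_indicator measurableSet_Icc]
    refine lintegral_congr fun x => ?_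
    unfold cascadeFT P17
    by_cases hx : x ∈ Set.Icc (-(2:ℝ) ^ ((m : ℤ) - 1)) ((2:ℝ) ^ ((m : ℤ) - 1))
    · rw [Set.indicator_of_mem hx, Set.indicator_of_mem hx]
      have : (ENNReal.toReal 2) = ((2:ℕ) : ℝ) := by simp
      rw [this, ENNReal.rpow_natCast]
      rw [enorm_eq_nnnorm, nnnorm_prod, ENNReal.coe_finset_prod, ← Finset.prod_pow]
    · rw [Set.indicator_of_notMem hx, Set.indicator_of_notMem hx]
      simp [ENNReal.rpow_eq_zero_iff]

lemma pull17 (H₀ : ℝ → ℂ)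
    (hbound : ∀ᵐ γ : ℝ,
      ‖H₀ γ‖ ^ 2 + ‖H₀ (γ + 1/2)‖ ^ 2 ≤ 1)
    (c : ℝ) (hc : c ≠ 0) :
    ∀ᵐ γ : ℝ, (‖H₀ (c * γ)‖₊ : ENNReal) ^ 2 + (‖H₀ (c * γ + 1/2)‖₊ : ENNReal) ^ 2 ≤ 1 := by
  set g : ℝ → ENNReal := fun γ => (‖H₀ γ‖₊ : ENNReal) ^ 2 + (‖H₀ (γ + 1/2)‖₊ : ENNReal) ^ 2
    with hg
  have hbound2 : ∀ᵐ γ : ℝ, g γ ≤ 1 := by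
    filter_upwards [hbound] with γ h
    have h1 : ‖H₀ γ‖ ^ 2 + ‖H₀ (γ + 1/2)‖ ^ 2 ≤ 1 := by
      simpa using h
    show (‖H₀ γ‖₊ : ENNReal) ^ 2 + (‖H₀ (γ + 1/2)‖₊ : ENNReal) ^ 2 ≤ 1
    rw [← ENNReal.coe_pow, ← ENNReal.coe_pow, ← ENNReal.coe_add, ← ENNReal.coe_one,
      ENNReal.coe_le_coe, ← NNReal.coe_le_coe]
    push_cast
    simpa using h1
  have h0 : volume {γ | ¬ g γ ≤ 1} = 0 := by
    rw [← MeasureTheory.ae_iff] ; exact hbound2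
  have hpre : volume ((c * ·) ⁻¹' {γ | ¬ g γ ≤ 1}) = 0 := by
    rw [Real.volume_preimage_mul_left hc, h0, mul_zero]
  rw [MeasureTheory.ae_iff]
  exact hpre



theorem stmt17 (H₀ : ℝ → ℂ) (hmeas : Measurable H₀)
    (hper : ∀ γ : ℝ, H₀ (γ + 1) = H₀ γ)
    (hbound : ∀ᵐ γ : ℝ,
      ‖H₀ γ‖ ^ 2 + ‖H₀ (γ + 1/2)‖ ^ 2 ≤ 1) :
    (∀ m : ℕ, eLpNorm (cascadeFT H₀ (m + 1)) 2 volume ≤ eLpNorm (cascadeFT H₀ m) 2 volume) ∧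
      ∀ m : ℕ, eLpNorm (cascadeFT H₀ m) 2 volume ≤ 1 := by
  have hQb : ∀ᵐ x : ℝ, ∀ m : ℕ,
      (‖H₀ ((2:ℝ) ^ (-((m+1:ℕ):ℤ)) * x)‖₊ : ENNReal) ^ 2
        + (‖H₀ ((2:ℝ) ^ (-((m+1:ℕ):ℤ)) * x + 1/2)‖₊ : ENNReal) ^ 2 ≤ 1 :=
    ae_all_iff.mpr fun m => pull17 H₀ hbound _ (by positivity)
  have hkey := key17 H₀ hmeas hper hQb
  have hJ1 : ∀ m : ℕ,
      (∫⁻ γ in Set.Icc (-(2:ℝ) ^ ((m : ℤ) - 1)) ((2:ℝ) ^ ((m : ℤ) - 1)), P17 H₀ m γ) ≤ 1 := by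
    intro m
    induction m with
    | zero =>
        have hP0 : ∀ γ : ℝ, P17 H₀ 0 γ = 1 := by
          intro γ; unfold P17; rw [Finset.Icc_eq_empty (by norm_num), Finset.prod_empty]
        calc (∫⁻ γ in Set.Icc (-(2:ℝ) ^ (((0:ℕ) : ℤ) - 1)) ((2:ℝ) ^ (((0:ℕ) : ℤ) - 1)),
              P17 H₀ 0 γ)
            = ∫⁻ _ in Set.Icc (-(2:ℝ) ^ (((0:ℕ) : ℤ) - 1)) ((2:ℝ) ^ (((0:ℕ) : ℤ) - 1)),
              (1 : ENNReal) := lintegral_congr fun γ => hP0 γ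
          _ = volume (Set.Icc (-(2:ℝ) ^ (((0:ℕ) : ℤ) - 1)) ((2:ℝ) ^ (((0:ℕ) : ℤ) - 1))) :=
              setLIntegral_one _
          _ ≤ 1 := by
              rw [Real.volume_Icc]
              norm_num
    | succ k ih => exact le_trans (hkey k) ih
  refine ⟨fun m => ?_, fun m => ?_⟩
  · rw [eLp17, eLp17]
    exact ENNReal.rpow_le_rpow (hkey m) (by norm_num)
  · rw [eLp17]
    calc (∫⁻ γ in Set.Icc (-(2:ℝ) ^ ((m : ℤ) - 1)) ((2:ℝ) ^ ((m : ℤ) - 1)), P17 H₀ m γ)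
          ^ (1/2 : ℝ)
        ≤ (1 : ENNReal) ^ (1/2 : ℝ) := ENNReal.rpow_le_rpow (hJ1 m) (by norm_num)
      _ = 1 := ENNReal.one_rpow _
end
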